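/- arXiv:2402.08332 — 5 statements merged into one kernel-verified Lean document; each statement's English description precedes it below -/
import Mathlib

section
/- Let G contain K_{2,3} as an induced minor, with vertices of K_{2,3} denoted u, v (one side) and a, b, c (other side). Let {X_u, X_v, X_a, X_b, X_c} be an induced minor model of K_{2,3} in G minimizing the total number of vertices |X_u ∪ X_v ∪ X_a ∪ X_b ∪ X_c|, and subject to that minimizing |X_a ∪ X_b ∪ X_c|. Then each of X_a, X_b, and X_c consists of a single vertex. -/
open SimpleGraph

universe u v

section Defs

variable {V : Type u}

/-- An induced minor model of `H` in `G`. -/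
def InducedMinorModel {W : Type v} (H : SimpleGraph W) (G : SimpleGraph V)
    (X : W → Set V) : Prop :=
  (∀ w, (X w).Nonempty) ∧ (∀ w, (G.induce (X w)).Connected) ∧
  (Pairwise fun w w' => Disjoint (X w) (X w')) ∧
  (Pairwise fun w w' => ((∃ x ∈ X w, ∃ y ∈ X w', G.Adj x y) ↔ H.Adj w w'))

/-- `G` contains `H` as an induced minor. -/
def HasInducedMinor {W : Type v} (H : SimpleGraph W) (G : SimpleGraph V) : Prop :=
  ∃ X : W → Set V, InducedMinorModel H G X

/-- The complete bipartite graph `K_{2,3}`. -/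
def K23 : SimpleGraph (Fin 2 ⊕ Fin 3) := completeBipartiteGraph (Fin 2) (Fin 3)

/-- `G` (as a whole graph) is a long prism. -/
def IsLongPrism (G : SimpleGraph V) : Prop :=
  ∃ (a₁ a₂ a₃ b₁ b₂ b₃ : V) (P₁ : G.Walk a₁ b₁) (P₂ : G.Walk a₂ b₂) (P₃ : G.Walk a₃ b₃),
    P₁.IsPath ∧ P₂.IsPath ∧ P₃.IsPath ∧
    1 ≤ P₁.length ∧ 1 ≤ P₂.length ∧ 1 ≤ P₃.length ∧
    (2 ≤ P₁.length ∨ 2 ≤ P₂.length ∨ 2 ≤ P₃.length) ∧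
    (∀ x : V, x ∈ P₁.support ∨ x ∈ P₂.support ∨ x ∈ P₃.support) ∧
    (∀ x : V, x ∈ P₁.support → x ∉ P₂.support) ∧
    (∀ x : V, x ∈ P₁.support → x ∉ P₃.support) ∧
    (∀ x : V, x ∈ P₂.support → x ∉ P₃.support) ∧
    (∀ x y : V, G.Adj x y ↔ (s(x, y) ∈ P₁.edges ∨ s(x, y) ∈ P₂.edges ∨ s(x, y) ∈ P₃.edges ∨
      s(x, y) ∈ ({s(a₁, a₂), s(a₂, a₃), s(a₁, a₃), s(b₁, b₂), s(b₂, b₃), s(b₁, b₃)} :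
        Set (Sym2 V))))

/-- `G` (as a whole graph) is a pyramid. -/
def IsPyramid (G : SimpleGraph V) : Prop :=
  ∃ (a b₁ b₂ b₃ : V) (P₁ : G.Walk a b₁) (P₂ : G.Walk a b₂) (P₃ : G.Walk a b₃),
    P₁.IsPath ∧ P₂.IsPath ∧ P₃.IsPath ∧
    1 ≤ P₁.length ∧ 1 ≤ P₂.length ∧ 1 ≤ P₃.length ∧
    ((2 ≤ P₁.length ∧ 2 ≤ P₂.length) ∨ (2 ≤ P₁.length ∧ 2 ≤ P₃.length) ∨
      (2 ≤ P₂.length ∧ 2 ≤ P₃.length)) ∧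
    (∀ x : V, x ∈ P₁.support ∨ x ∈ P₂.support ∨ x ∈ P₃.support) ∧
    (∀ x : V, x ∈ P₁.support → x ∈ P₂.support → x = a) ∧
    (∀ x : V, x ∈ P₁.support → x ∈ P₃.support → x = a) ∧
    (∀ x : V, x ∈ P₂.support → x ∈ P₃.support → x = a) ∧
    (∀ x y : V, G.Adj x y ↔ (s(x, y) ∈ P₁.edges ∨ s(x, y) ∈ P₂.edges ∨ s(x, y) ∈ P₃.edges ∨
      s(x, y) ∈ ({s(b₁, b₂), s(b₂, b₃), s(b₁, b₃)} : Set (Sym2 V))))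

/-- `G` (as a whole graph) is a theta. -/
def IsTheta (G : SimpleGraph V) : Prop :=
  ∃ (a b : V) (P₁ : G.Walk a b) (P₂ : G.Walk a b) (P₃ : G.Walk a b),
    P₁.IsPath ∧ P₂.IsPath ∧ P₃.IsPath ∧
    2 ≤ P₁.length ∧ 2 ≤ P₂.length ∧ 2 ≤ P₃.length ∧
    (∀ x : V, x ∈ P₁.support ∨ x ∈ P₂.support ∨ x ∈ P₃.support) ∧
    (∀ x : V, x ∈ P₁.support → x ∈ P₂.support → x = a ∨ x = b) ∧
    (∀ x : V, x ∈ P₁.support → x ∈ P₃.support → x = a ∨ x = b) ∧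
    (∀ x : V, x ∈ P₂.support → x ∈ P₃.support → x = a ∨ x = b) ∧
    (∀ x y : V, G.Adj x y ↔ (s(x, y) ∈ P₁.edges ∨ s(x, y) ∈ P₂.edges ∨ s(x, y) ∈ P₃.edges))

/-- `G` (as a whole graph) is the cube. -/
def IsCube (G : SimpleGraph V) : Prop :=
  ∃ v₁ v₂ v₃ v₄ v₅ v₆ x y : V,
    [v₁, v₂, v₃, v₄, v₅, v₆, x, y].Nodup ∧
    (∀ u : V, u ∈ [v₁, v₂, v₃, v₄, v₅, v₆, x, y]) ∧
    (∀ u w : V, G.Adj u w ↔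
      s(u, w) ∈ ({s(v₁, v₂), s(v₂, v₃), s(v₃, v₄), s(v₄, v₅), s(v₅, v₆), s(v₆, v₁),
        s(x, v₁), s(x, v₃), s(x, v₅), s(y, v₂), s(y, v₄), s(y, v₆)} : Set (Sym2 V)))

/-- `Q` is a sector of the wheel with rim `C` and center `x`. -/
def IsSectorOf (G : SimpleGraph V) (x : V) {w : V} (C : G.Walk w w)
    {p q : V} (Q : G.Walk p q) : Prop :=
  Q.IsPath ∧ 1 ≤ Q.length ∧ (∀ e ∈ Q.edges, e ∈ C.edges) ∧ G.Adj x p ∧ G.Adj x q ∧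
  (∀ u ∈ Q.support, u ≠ p → u ≠ q → ¬ G.Adj x u)

/-- The closed walk `C` together with the vertex `x` form a wheel in `G`,
i.e. `C` is a hole (a chordless cycle of length at least 4) and `x` has at least
three neighbors on `C`. -/
def IsWheelWith (G : SimpleGraph V) (x : V) {w : V} (C : G.Walk w w) : Prop :=
  C.IsCycle ∧ 4 ≤ C.length ∧ x ∉ C.support ∧
  (∀ y z : V, y ∈ C.support → z ∈ C.support → (G.Adj y z ↔ s(y, z) ∈ C.edges)) ∧
  (∃ n₁ n₂ n₃ : V, n₁ ∈ C.support ∧ n₂ ∈ C.support ∧ n₃ ∈ C.support ∧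
    n₁ ≠ n₂ ∧ n₁ ≠ n₃ ∧ n₂ ≠ n₃ ∧ G.Adj x n₁ ∧ G.Adj x n₂ ∧ G.Adj x n₃)

/-- `G` (as a whole graph) is a broken wheel: a wheel at least two of whose
sectors have length at least 2. -/
def IsBrokenWheel (G : SimpleGraph V) : Prop :=
  ∃ (x w : V) (C : G.Walk w w), IsWheelWith G x C ∧
    (∀ u : V, u = x ∨ u ∈ C.support) ∧
    ∃ (p₁ q₁ p₂ q₂ : V) (Q₁ : G.Walk p₁ q₁) (Q₂ : G.Walk p₂ q₂),
      IsSectorOf G x C Q₁ ∧ IsSectorOf G x C Q₂ ∧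
      2 ≤ Q₁.length ∧ 2 ≤ Q₂.length ∧ (∀ e ∈ Q₁.edges, e ∉ Q₂.edges)

/-- `G` (as a whole graph) belongs to the class `S` (subdivisions of `K_{1,3}`),
with extremities `e₁`, `e₂`, `e₃`. -/
def IsS (G : SimpleGraph V) (e₁ e₂ e₃ : V) : Prop :=
  ∃ (u : V) (P₁ : G.Walk u e₁) (P₂ : G.Walk u e₂) (P₃ : G.Walk u e₃),
    P₁.IsPath ∧ P₂.IsPath ∧ P₃.IsPath ∧
    1 ≤ P₁.length ∧ 1 ≤ P₂.length ∧ 1 ≤ P₃.length ∧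
    (∀ x : V, x ∈ P₁.support ∨ x ∈ P₂.support ∨ x ∈ P₃.support) ∧
    (∀ x : V, x ∈ P₁.support → x ∈ P₂.support → x = u) ∧
    (∀ x : V, x ∈ P₁.support → x ∈ P₃.support → x = u) ∧
    (∀ x : V, x ∈ P₂.support → x ∈ P₃.support → x = u) ∧
    (∀ x y : V, G.Adj x y ↔ (s(x, y) ∈ P₁.edges ∨ s(x, y) ∈ P₂.edges ∨ s(x, y) ∈ P₃.edges))

/-- `G` (as a whole graph) belongs to the class `T`, with extremities `e₁`, `e₂`, `e₃`. -/
def IsT (G : SimpleGraph V) (e₁ e₂ e₃ : V) : Prop :=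
  ∃ (t₁ t₂ t₃ : V) (P₁ : G.Walk t₁ e₁) (P₂ : G.Walk t₂ e₂) (P₃ : G.Walk t₃ e₃),
    P₁.IsPath ∧ P₂.IsPath ∧ P₃.IsPath ∧
    1 ≤ P₁.length ∧ 1 ≤ P₂.length ∧ 1 ≤ P₃.length ∧
    (∀ x : V, x ∈ P₁.support ∨ x ∈ P₂.support ∨ x ∈ P₃.support) ∧
    (∀ x : V, x ∈ P₁.support → x ∉ P₂.support) ∧
    (∀ x : V, x ∈ P₁.support → x ∉ P₃.support) ∧
    (∀ x : V, x ∈ P₂.support → x ∉ P₃.support) ∧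
    (∀ x y : V, G.Adj x y ↔ (s(x, y) ∈ P₁.edges ∨ s(x, y) ∈ P₂.edges ∨ s(x, y) ∈ P₃.edges ∨
      s(x, y) ∈ ({s(t₁, t₂), s(t₂, t₃), s(t₁, t₃)} : Set (Sym2 V))))

/-- `G` (as a whole graph) belongs to the class `M`, with extremities the two
endpoints `e₁`, `e₂` of the path and the center `e₃`. -/
def IsM (G : SimpleGraph V) (e₁ e₂ e₃ : V) : Prop :=
  ∃ P : G.Walk e₁ e₂,
    P.IsPath ∧ e₃ ∉ P.support ∧
    (∀ x : V, x = e₃ ∨ x ∈ P.support) ∧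
    (∀ x y : V, x ∈ P.support → y ∈ P.support → (G.Adj x y ↔ s(x, y) ∈ P.edges)) ∧
    ¬ G.Adj e₃ e₁ ∧ ¬ G.Adj e₃ e₂ ∧
    (∃ u w : V, u ∈ P.support ∧ w ∈ P.support ∧ u ≠ w ∧ G.Adj e₃ u ∧ G.Adj e₃ w)

/-- `G` belongs to `S ∪ T ∪ M` and its set of extremities is exactly `I`. -/
def IsSTMwithExtremities (G : SimpleGraph V) (I : Set V) : Prop :=
  ∃ e₁ e₂ e₃ : V, I = {e₁, e₂, e₃} ∧
    (IsS G e₁ e₂ e₃ ∨ IsT G e₁ e₂ e₃ ∨ IsM G e₁ e₂ e₃)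

/-- The interior of a path (its support minus the two endpoints). -/
def walkInterior {G : SimpleGraph V} {p q : V} (W : G.Walk p q) : Set V :=
  {v | v ∈ W.support ∧ v ≠ p ∧ v ≠ q}

/-- A broken wheel in `G` together with a frame: the rim is the concatenation
`P ++ Q ++ R ++ S` where `P = a…b` and `R = c…d` are sectors of length at least 2
(`a`, `b`, `c`, `d` in clockwise order). -/
structure BWFrame (G : SimpleGraph V) where
  x : V
  a : V
  b : V
  c : V
  d : V
  P : G.Walk a b
  Q : G.Walk b c
  R : G.Walk c d
  S : G.Walk d a
  hP : 2 ≤ P.length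
  hR : 2 ≤ R.length
  nondeg : ¬ (b = c ∧ d = a)
  cyc : (((P.append Q).append R).append S).IsCycle
  len4 : 4 ≤ (((P.append Q).append R).append S).length
  hx : x ∉ (((P.append Q).append R).append S).support
  chordless : ∀ y z : V, y ∈ (((P.append Q).append R).append S).support →
    z ∈ (((P.append Q).append R).append S).support →
    (G.Adj y z ↔ s(y, z) ∈ (((P.append Q).append R).append S).edges)
  adja : G.Adj x a
  adjb : G.Adj x b
  adjc : G.Adj x c
  adjd : G.Adj x d
  secP : ∀ u ∈ P.support, u ≠ a → u ≠ b → ¬ G.Adj x u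
  secR : ∀ u ∈ R.support, u ≠ c → u ≠ d → ¬ G.Adj x u

/-- The rim of a framed broken wheel. -/
def BWFrame.rim {G : SimpleGraph V} (F : BWFrame G) : G.Walk F.a F.a :=
  ((F.P.append F.Q).append F.R).append F.S

/-- The vertex set of a framed broken wheel. -/
def BWFrame.verts {G : SimpleGraph V} (F : BWFrame G) : Set V :=
  insert F.x {v | v ∈ F.rim.support}

/-- Optimality of a framed broken wheel `(W, F)`: no broken wheel of `G` has fewer
vertices, and subject to that the sum of the lengths of `Q` and `S` is minimal. -/
def BWFrame.Optimal {G : SimpleGraph V} (F : BWFrame G) : Prop :=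
  (∀ T : Set V, IsBrokenWheel (G.induce T) → F.verts.ncard ≤ T.ncard) ∧
  (∀ F' : BWFrame G, F'.verts.ncard = F.verts.ncard →
    F.Q.length + F.S.length ≤ F'.Q.length + F'.S.length)

/-- `S` separates `u` and `v` in `G`: both avoid `S` and every walk between them
meets `S`. -/
def Separates (G : SimpleGraph V) (S : Set V) (u v : V) : Prop :=
  u ∉ S ∧ v ∉ S ∧ ∀ p : G.Walk u v, ∃ w ∈ p.support, w ∈ S

/-- `S` is a minimal separator of `G`: a minimal `u,v`-separator for some `u`, `v`. -/
def IsMinimalSeparator (G : SimpleGraph V) (S : Set V) : Prop :=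
  ∃ u v : V, Separates G S u v ∧ ∀ T ⊆ S, Separates G T u v → T = S

/-- `A` is an independent set of `G`. -/
def IsIndepSet (G : SimpleGraph V) (A : Set V) : Prop :=
  ∀ x ∈ A, ∀ y ∈ A, x ≠ y → ¬ G.Adj x y

end Defs

section Helpers

def inclHom {V : Type u} (G : SimpleGraph V) (s : Set V) : G.induce s →g G := ⟨Subtype.val, fun h => h⟩

/-- A finite connected induced subgraph on at least two vertices has a non-cut vertex. -/
lemma exists_noncut {V : Type u} {G : SimpleGraph V} [Finite V] {S : Set V} (hconn : (G.induce S).Connected)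
    {a b : V} (ha : a ∈ S) (hb : b ∈ S) (hab : a ≠ b) :
    ∃ z ∈ S, (S \ {z}).Nonempty ∧ (G.induce (S \ {z})).Connected := by
  classical
  set H := G.induce S with hH
  have hne : Nonempty ↥S := ⟨⟨a, ha⟩⟩
  set r : ↥S := ⟨a, ha⟩ with hr
  obtain ⟨z, hzmax⟩ := Finite.exists_max (H.dist r)
  have hzr : z ≠ r := by
    intro h
    have h0 : H.dist r ⟨b, hb⟩ = 0 := by
      have h1 := hzmax ⟨b, hb⟩
      rw [h, SimpleGraph.dist_self] at h1
      omega
    have := (hconn.dist_eq_zero_iff).mp h0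
    exact hab (congrArg Subtype.val this)
  have avoid : ∀ y : ↥S, y ≠ z → ∃ p : H.Walk r y, z ∉ p.support := by
    intro y hy
    obtain ⟨p, hp⟩ := hconn.exists_walk_length_eq_dist r y
    refine ⟨p, fun hzs => ?_⟩
    have h1 : H.dist r z ≤ (p.takeUntil z hzs).length := dist_le _
    have h2 : (p.takeUntil z hzs).length + (p.dropUntil z hzs).length = p.length := by
      have := congrArg Walk.length (p.take_spec hzs)
      rwa [Walk.length_append] at this
    have h3 : 1 ≤ (p.dropUntil z hzs).length := by
      rcases Nat.eq_zero_or_pos (p.dropUntil z hzs).length with h | h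
      · exact absurd (Walk.eq_of_length_eq_zero h) hy.symm
      · exact h
    have h4 : H.dist r y ≤ H.dist r z := hzmax y
    omega
  refine ⟨z.val, z.2, ⟨a, ha, fun h => hzr (Subtype.ext (by simpa using h.symm))⟩, ?_⟩
  have haS : a ∈ S \ {z.val} := ⟨ha, fun h => hzr (Subtype.ext (by simpa using h.symm))⟩
  apply G.induce_connected_of_patches a haS
  intro v hv
  have hy : (⟨v, hv.1⟩ : ↥S) ≠ z := fun h => hv.2 (by simpa using congrArg Subtype.val h)
  obtain ⟨p, hp⟩ := avoid ⟨v, hv.1⟩ hy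
  set Q := p.map (inclHom G S) with hQ
  have hsub : {x | x ∈ Q.support} ⊆ S \ {z.val} := by
    intro x hx
    simp only [hQ, Set.mem_setOf_eq, Walk.support_map, List.mem_map] at hx
    obtain ⟨c, hc, rfl⟩ := hx
    exact ⟨c.2, fun h => hp (by rwa [show c = z from Subtype.ext (Set.mem_singleton_iff.mp h)] at hc)⟩
  refine ⟨{x | x ∈ Q.support}, hsub, Q.start_mem_support, Q.end_mem_support, ?_⟩
  exact (Q.connected_induce_support).preconnected _ _

lemma exists_adj_in {V : Type u} {G : SimpleGraph V} (S : Set V)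
    (hconn : (G.induce S).Connected) {z w : V}
    (hz : z ∈ S) (hw : w ∈ S) (hne : z ≠ w) :
    ∃ y ∈ S, y ≠ z ∧ G.Adj z y := by
  obtain ⟨p⟩ := hconn ⟨z, hz⟩ ⟨w, hw⟩
  cases p with
  | nil => exact absurd rfl hne
  | cons h q =>
    rename_i b
    have hadj : G.Adj z b.val := h
    exact ⟨b.val, b.2, (hadj.ne).symm, hadj⟩

lemma K23_adj_lr (i : Fin 2) (j : Fin 3) : K23.Adj (Sum.inl i) (Sum.inr j) := Or.inl ⟨rfl, rfl⟩
lemma K23_adj_rl (j : Fin 3) (i : Fin 2) : K23.Adj (Sum.inr j) (Sum.inl i) := Or.inr ⟨rfl, rfl⟩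
lemma K23_not_adj_rr (j j' : Fin 3) : ¬ K23.Adj (Sum.inr j) (Sum.inr j') := by
  rintro (⟨h, -⟩ | ⟨-, h⟩) <;> simp at h
lemma K23_not_adj_ll (i i' : Fin 2) : ¬ K23.Adj (Sum.inl i) (Sum.inl i') := by
  rintro (⟨-, h⟩ | ⟨h, -⟩) <;> simp at h


lemma shrink_contra {V : Type u} [Fintype V] {G : SimpleGraph V} {X : Fin 2 ⊕ Fin 3 → Set V}
    (hX : InducedMinorModel K23 G X)
    (hmin1 : ∀ Y : Fin 2 ⊕ Fin 3 → Set V, InducedMinorModel K23 G Y →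
      (⋃ w, X w).ncard ≤ (⋃ w, Y w).ncard)
    (j : Fin 3) (C : Set V) (hCsub : C ⊆ X (Sum.inr j))
    (t : V) (htA : t ∈ X (Sum.inr j)) (htC : t ∉ C)
    (hCne : C.Nonempty) (hCconn : (G.induce C).Connected)
    (hCE : ∀ i : Fin 2, ∃ x ∈ C, ∃ y ∈ X (Sum.inl i), G.Adj x y) : False := by
  classical
  obtain ⟨hne, hconn, hdisj, hadj⟩ := hX
  set Y : Fin 2 ⊕ Fin 3 → Set V := Function.update X (Sum.inr j) C with hYdef
  have hYj : Y (Sum.inr j) = C := Function.update_self _ _ _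
  have hYo : ∀ w, w ≠ Sum.inr j → Y w = X w := fun w hw => Function.update_of_ne hw _ _
  have hmodel : InducedMinorModel K23 G Y := by
    refine ⟨?_, ?_, ?_, ?_⟩
    · intro w
      by_cases h : w = Sum.inr j
      · rw [h, hYj]; exact hCne
      · rw [hYo w h]; exact hne w
    · intro w
      by_cases h : w = Sum.inr j
      · rw [h, hYj]; exact hCconn
      · rw [hYo w h]; exact hconn w
    · intro w w' hww'
      by_cases h : w = Sum.inr j
      · subst h
        rw [hYj, hYo w' (Ne.symm hww')]
        exact Set.disjoint_of_subset_left hCsub (hdisj hww')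
      · by_cases h' : w' = Sum.inr j
        · subst h'
          rw [hYj, hYo w h]
          exact Set.disjoint_of_subset_right hCsub (hdisj hww')
        · rw [hYo w h, hYo w' h']; exact hdisj hww'
    · intro w w' hww'
      by_cases h : w = Sum.inr j
      · subst h
        rw [hYj, hYo w' (Ne.symm hww')]
        rcases w' with i | j'
        · exact iff_of_true (by obtain ⟨x, hx, y, hy, hxy⟩ := hCE i
                                exact ⟨x, hx, y, hy, hxy⟩) (K23_adj_rl j i)
        · refine iff_of_false ?_ (K23_not_adj_rr j j')
          rintro ⟨x, hx, y, hy, hxy⟩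
          exact (K23_not_adj_rr j j')
            ((hadj hww').mp ⟨x, hCsub hx, y, hy, hxy⟩)
      · by_cases h' : w' = Sum.inr j
        · subst h'
          rw [hYj, hYo w h]
          rcases w with i | j'
          · exact iff_of_true (by obtain ⟨x, hx, y, hy, hxy⟩ := hCE i
                                  exact ⟨y, hy, x, hx, hxy.symm⟩) (K23_adj_lr i j)
          · refine iff_of_false ?_ (K23_not_adj_rr j' j)
            rintro ⟨x, hx, y, hy, hxy⟩
            exact (K23_not_adj_rr j' j)
              ((hadj hww').mp ⟨x, hx, y, hCsub hy, hxy⟩)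
        · rw [hYo w h, hYo w' h']; exact hadj hww'
  have hsub : (⋃ w, Y w) ⊆ ⋃ w, X w := by
    intro x hx
    obtain ⟨w, hw⟩ := Set.mem_iUnion.mp hx
    by_cases h : w = Sum.inr j
    · subst h; rw [hYj] at hw
      exact Set.mem_iUnion.mpr ⟨Sum.inr j, hCsub hw⟩
    · rw [hYo w h] at hw
      exact Set.mem_iUnion.mpr ⟨w, hw⟩
  have htX : t ∈ ⋃ w, X w := Set.mem_iUnion.mpr ⟨Sum.inr j, htA⟩
  have htY : t ∉ ⋃ w, Y w := by
    intro ht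
    obtain ⟨w, hw⟩ := Set.mem_iUnion.mp ht
    by_cases h : w = Sum.inr j
    · subst h; rw [hYj] at hw; exact htC hw
    · rw [hYo w h] at hw
      exact Set.disjoint_left.mp (hdisj h) hw htA
  have hlt : (⋃ w, Y w).ncard < (⋃ w, X w).ncard :=
    Set.ncard_lt_ncard ⟨hsub, fun hs => htY (hs htX)⟩ (Set.toFinite _)
  exact absurd (hmin1 Y hmodel) (by omega)

lemma singleton_induce_connected {V : Type u} (G : SimpleGraph V) (z : V) :
    (G.induce ({z} : Set V)).Connected := by
  constructor
  intro a b
  have : a = b := Subsingleton.elim a b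
  rw [this]

lemma move_contra {V : Type u} [Fintype V] {G : SimpleGraph V} {X : Fin 2 ⊕ Fin 3 → Set V}
    (hX : InducedMinorModel K23 G X)
    (hmin2 : ∀ Y : Fin 2 ⊕ Fin 3 → Set V, InducedMinorModel K23 G Y →
      (⋃ w, Y w).ncard = (⋃ w, X w).ncard →
      (⋃ j : Fin 3, X (Sum.inr j)).ncard ≤ (⋃ j : Fin 3, Y (Sum.inr j)).ncard)
    (j : Fin 3) (i i' : Fin 2) (hii' : i ≠ i') (z : V) (hz : z ∈ X (Sum.inr j))
    (hBconn : (G.induce (X (Sum.inr j) \ {z})).Connected)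
    (w0 : V) (hw0 : w0 ∈ X (Sum.inr j) \ {z}) (hzw0 : G.Adj z w0)
    (hEi : ∃ x ∈ X (Sum.inr j) \ {z}, ∃ y ∈ X (Sum.inl i), G.Adj x y)
    (hNi' : ¬ ∃ x ∈ X (Sum.inr j) \ {z}, ∃ y ∈ X (Sum.inl i'), G.Adj x y) : False := by
  classical
  obtain ⟨hne, hconn, hdisj, hadj⟩ := hX
  set B : Set V := X (Sum.inr j) \ {z} with hBdef
  have hBA : B ⊆ X (Sum.inr j) := Set.diff_subset
  have hk2 : ∀ k : Fin 2, k ≠ i → k = i' := by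
    intro k hk
    fin_cases k <;> fin_cases i <;> fin_cases i' <;> simp_all
  have esymm : ∀ {s t : Set V}, (∃ x ∈ s, ∃ y ∈ t, G.Adj x y) →
      ∃ x ∈ t, ∃ y ∈ s, G.Adj x y := fun ⟨x, hx, y, hy, h⟩ => ⟨y, hy, x, hx, h.symm⟩
  -- z is adjacent to X (inl i')
  have hzi' : ∃ y ∈ X (Sum.inl i'), G.Adj z y := by
    obtain ⟨x, hx, y, hy, hxy⟩ :=
      (hadj (show (Sum.inr j : Fin 2 ⊕ Fin 3) ≠ Sum.inl i' by simp)).mpr (K23_adj_rl j i')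
    rcases eq_or_ne x z with rfl | hxz
    · exact ⟨y, hy, hxy⟩
    · exact absurd ⟨x, ⟨hx, hxz⟩, y, hy, hxy⟩ hNi'
  set Y : Fin 2 ⊕ Fin 3 → Set V :=
    Function.update (Function.update X (Sum.inr j) {z}) (Sum.inl i) (X (Sum.inl i) ∪ B)
    with hYdef
  have hYu : Y (Sum.inl i) = X (Sum.inl i) ∪ B := Function.update_self _ _ _
  have hYa : Y (Sum.inr j) = {z} := by
    rw [hYdef, Function.update_of_ne (by simp), Function.update_self]
  have hYo : ∀ w, w ≠ Sum.inl i → w ≠ Sum.inr j → Y w = X w := by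
    intro w h1 h2
    rw [hYdef, Function.update_of_ne h1, Function.update_of_ne h2]
  have hzB : z ∉ B := fun h => h.2 rfl
  have hzXw : ∀ w, w ≠ Sum.inr j → z ∉ X w :=
    fun w hw h => Set.disjoint_left.mp (hdisj (Ne.symm hw)) hz h
  -- edge helper facts
  have eUA : ∃ x ∈ X (Sum.inl i) ∪ B, ∃ y ∈ ({z} : Set V), G.Adj x y :=
    ⟨w0, Or.inr hw0, z, rfl, hzw0.symm⟩
  have eUn : ∀ k : Fin 2, k ≠ i →
      ¬ ∃ x ∈ X (Sum.inl i) ∪ B, ∃ y ∈ X (Sum.inl k), G.Adj x y := by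
    intro k hk
    rintro ⟨x, hx | hx, y, hy, hxy⟩
    · exact K23_not_adj_ll i k
        ((hadj (show (Sum.inl i : Fin 2 ⊕ Fin 3) ≠ Sum.inl k by
          simpa using (fun h => hk h.symm))).mp ⟨x, hx, y, hy, hxy⟩)
    · rw [hk2 k hk] at hy
      exact hNi' ⟨x, hx, y, hy, hxy⟩
  have eUr : ∀ j' : Fin 3, ∃ x ∈ X (Sum.inl i) ∪ B, ∃ y ∈ X (Sum.inr j'), G.Adj x y := by
    intro j'
    obtain ⟨x, hx, y, hy, hxy⟩ :=
      (hadj (show (Sum.inl i : Fin 2 ⊕ Fin 3) ≠ Sum.inr j' by simp)).mpr (K23_adj_lr i j')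
    exact ⟨x, Or.inl hx, y, hy, hxy⟩
  have eZi' : ∃ x ∈ ({z} : Set V), ∃ y ∈ X (Sum.inl i'), G.Adj x y := by
    obtain ⟨y, hy, h⟩ := hzi'
    exact ⟨z, rfl, y, hy, h⟩
  have eZr : ∀ j' : Fin 3, j' ≠ j →
      ¬ ∃ x ∈ ({z} : Set V), ∃ y ∈ X (Sum.inr j'), G.Adj x y := by
    intro j' hj'
    rintro ⟨x, hx, y, hy, hxy⟩
    rw [Set.mem_singleton_iff] at hx
    subst hx
    exact K23_not_adj_rr j j'
      ((hadj (show (Sum.inr j : Fin 2 ⊕ Fin 3) ≠ Sum.inr j' by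
        simpa using (fun h => hj' h.symm))).mp ⟨x, hz, y, hy, hxy⟩)
  have hmodel : InducedMinorModel K23 G Y := by
    refine ⟨?_, ?_, ?_, ?_⟩
    · intro w
      by_cases h1 : w = Sum.inl i
      · rw [h1, hYu]; exact (hne _).mono Set.subset_union_left
      · by_cases h2 : w = Sum.inr j
        · rw [h2, hYa]; exact ⟨z, rfl⟩
        · rw [hYo w h1 h2]; exact hne w
    · intro w
      by_cases h1 : w = Sum.inl i
      · rw [h1, hYu]
        obtain ⟨x, hx, y, hy, hxy⟩ := hEi
        exact connected_induce_union (hconn _).preconnected hBconn.preconnected hy hx hxy.symm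
      · by_cases h2 : w = Sum.inr j
        · rw [h2, hYa]; exact singleton_induce_connected G z
        · rw [hYo w h1 h2]; exact hconn w
    · -- disjointness
      have dUnion : ∀ w, w ≠ Sum.inl i → w ≠ Sum.inr j →
          Disjoint (X (Sum.inl i) ∪ B) (X w) := by
        intro w h1 h2
        exact Set.disjoint_union_left.mpr
          ⟨hdisj (Ne.symm h1), Set.disjoint_of_subset_left hBA (hdisj (Ne.symm h2))⟩
      have dZ : ∀ w, w ≠ Sum.inr j → Disjoint ({z} : Set V) (X w) :=
        fun w hw => Set.disjoint_singleton_left.mpr (hzXw w hw)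
      have dUZ : Disjoint (X (Sum.inl i) ∪ B) ({z} : Set V) :=
        Set.disjoint_singleton_right.mpr
          (fun h => h.elim (hzXw _ (by simp)) hzB)
      intro w w' hww'
      by_cases h1 : w = Sum.inl i
      · subst h1
        rw [hYu]
        by_cases h1' : w' = Sum.inr j
        · rw [h1', hYa]; exact dUZ
        · rw [hYo w' (Ne.symm hww') h1']
          exact dUnion w' (Ne.symm hww') h1'
      · by_cases h2 : w = Sum.inr j
        · subst h2
          rw [hYa]
          by_cases h1' : w' = Sum.inl i
          · rw [h1', hYu]; exact dUZ.symm
          · rw [hYo w' h1' (Ne.symm hww')]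
            exact dZ w' (Ne.symm hww')
        · rw [hYo w h1 h2]
          by_cases h1' : w' = Sum.inl i
          · rw [h1', hYu]; exact (dUnion w h1 h2).symm
          · by_cases h2' : w' = Sum.inr j
            · rw [h2', hYa]; exact (dZ w h2).symm
            · rw [hYo w' h1' h2']; exact hdisj hww'
    · -- adjacency
      intro w w' hww'
      by_cases h1 : w = Sum.inl i
      · subst h1
        rw [hYu]
        by_cases h1' : w' = Sum.inr j
        · rw [h1', hYa]
          exact iff_of_true eUA (K23_adj_lr i j)
        · rw [hYo w' (Ne.symm hww') h1']
          rcases w' with k | j'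
          · have hk : k ≠ i := fun h => hww' (by rw [h])
            exact iff_of_false (eUn k hk) (K23_not_adj_ll i k)
          · exact iff_of_true (eUr j') (K23_adj_lr i j')
      · by_cases h2 : w = Sum.inr j
        · subst h2
          rw [hYa]
          by_cases h1' : w' = Sum.inl i
          · rw [h1', hYu]
            exact iff_of_true (esymm eUA) (K23_adj_rl j i)
          · rw [hYo w' h1' (Ne.symm hww')]
            rcases w' with k | j'
            · have hk : k ≠ i := fun h => h1' (by rw [h])
              rw [hk2 k hk]
              exact iff_of_true eZi' (K23_adj_rl j i')
            · have hj' : j' ≠ j := fun h => hww' (by rw [h])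
              exact iff_of_false (eZr j' hj') (K23_not_adj_rr j j')
        · rw [hYo w h1 h2]
          by_cases h1' : w' = Sum.inl i
          · subst h1'
            rw [hYu]
            rcases w with k | j'
            · have hk : k ≠ i := fun h => h1 (by rw [h])
              exact iff_of_false (fun e => eUn k hk (esymm e)) (K23_not_adj_ll k i)
            · exact iff_of_true (esymm (eUr j')) (K23_adj_rl j' i)
          · by_cases h2' : w' = Sum.inr j
            · subst h2'
              rw [hYa]
              rcases w with k | j'
              · have hk : k ≠ i := fun h => h1 (by rw [h])
                rw [hk2 k hk]
                exact iff_of_true (esymm eZi') (K23_adj_lr i' j)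
              · have hj' : j' ≠ j := fun h => h2 (by rw [h])
                exact iff_of_false (fun e => eZr j' hj' (esymm e)) (K23_not_adj_rr j' j)
            · rw [hYo w' h1' h2']
              exact hadj hww'
  -- unions
  have hUeq : (⋃ w, Y w) = ⋃ w, X w := by
    apply Set.Subset.antisymm
    · intro x hx
      obtain ⟨w, hw⟩ := Set.mem_iUnion.mp hx
      by_cases h1 : w = Sum.inl i
      · rw [h1, hYu] at hw
        rcases hw with h | h
        · exact Set.mem_iUnion.mpr ⟨Sum.inl i, h⟩
        · exact Set.mem_iUnion.mpr ⟨Sum.inr j, hBA h⟩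
      · by_cases h2 : w = Sum.inr j
        · rw [h2, hYa] at hw
          rw [Set.mem_singleton_iff] at hw
          subst hw
          exact Set.mem_iUnion.mpr ⟨Sum.inr j, hz⟩
        · rw [hYo w h1 h2] at hw
          exact Set.mem_iUnion.mpr ⟨w, hw⟩
    · intro x hx
      obtain ⟨w, hw⟩ := Set.mem_iUnion.mp hx
      by_cases h1 : w = Sum.inl i
      · subst h1
        exact Set.mem_iUnion.mpr ⟨Sum.inl i, hYu ▸ Or.inl hw⟩
      · by_cases h2 : w = Sum.inr j
        · subst h2
          rcases eq_or_ne x z with rfl | hxz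
          · exact Set.mem_iUnion.mpr ⟨Sum.inr j, hYa ▸ rfl⟩
          · exact Set.mem_iUnion.mpr ⟨Sum.inl i, hYu ▸ Or.inr ⟨hw, hxz⟩⟩
        · exact Set.mem_iUnion.mpr ⟨w, (hYo w h1 h2) ▸ hw⟩
  have hstep := hmin2 Y hmodel (congrArg Set.ncard hUeq)
  have hsubr : (⋃ j' : Fin 3, Y (Sum.inr j')) ⊆ ⋃ j' : Fin 3, X (Sum.inr j') := by
    intro x hx
    obtain ⟨j', hj'⟩ := Set.mem_iUnion.mp hx
    by_cases h : j' = j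
    · subst h
      rw [hYa, Set.mem_singleton_iff] at hj'
      subst hj'
      exact Set.mem_iUnion.mpr ⟨j', hz⟩
    · rw [hYo _ (by simp) (by simpa using h)] at hj'
      exact Set.mem_iUnion.mpr ⟨j', hj'⟩
  have hw0X : w0 ∈ ⋃ j' : Fin 3, X (Sum.inr j') := Set.mem_iUnion.mpr ⟨j, hw0.1⟩
  have hw0Y : w0 ∉ ⋃ j' : Fin 3, Y (Sum.inr j') := by
    intro h
    obtain ⟨j', hj'⟩ := Set.mem_iUnion.mp h
    by_cases hjj : j' = j
    · subst hjj
      rw [hYa, Set.mem_singleton_iff] at hj'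
      exact hw0.2 hj'
    · rw [hYo _ (by simp) (by simpa using hjj)] at hj'
      exact Set.disjoint_left.mp
        (hdisj (show (Sum.inr j' : Fin 2 ⊕ Fin 3) ≠ Sum.inr j by simpa using hjj))
        hj' hw0.1
  have hlt : (⋃ j' : Fin 3, Y (Sum.inr j')).ncard < (⋃ j' : Fin 3, X (Sum.inr j')).ncard :=
    Set.ncard_lt_ncard ⟨hsubr, fun hs => hw0Y (hs hw0X)⟩ (Set.toFinite _)
  omega

end Helpers


/-- Claim 3.3: in an induced minor model of `K_{2,3}` minimizing the total number of
vertices and, subject to that, `|X_a ∪ X_b ∪ X_c|`, each of `X_a`, `X_b`, `X_c`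
is a single vertex.  Here `Sum.inr j` for `j : Fin 3` are the vertices `a`, `b`, `c`. -/
theorem stmt6 {V : Type u} [Fintype V] (G : SimpleGraph V)
    (X : Fin 2 ⊕ Fin 3 → Set V) (hX : InducedMinorModel K23 G X)
    (hmin1 : ∀ Y : Fin 2 ⊕ Fin 3 → Set V, InducedMinorModel K23 G Y →
      (⋃ w, X w).ncard ≤ (⋃ w, Y w).ncard)
    (hmin2 : ∀ Y : Fin 2 ⊕ Fin 3 → Set V, InducedMinorModel K23 G Y →
      (⋃ w, Y w).ncard = (⋃ w, X w).ncard →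
      (⋃ j : Fin 3, X (Sum.inr j)).ncard ≤ (⋃ j : Fin 3, Y (Sum.inr j)).ncard) :
    ∀ j : Fin 3, ∃ v : V, X (Sum.inr j) = {v} := by
  classical
  intro j
  by_contra hno
  push_neg at hno
  have hconnA := hX.2.1 (Sum.inr j)
  obtain ⟨a0, ha0⟩ := hX.1 (Sum.inr j)
  have hnsub : ¬ X (Sum.inr j) ⊆ {a0} := fun hs =>
    hno a0 (Set.Subset.antisymm hs (Set.singleton_subset_iff.mpr ha0))
  obtain ⟨b0, hb0, hb0a⟩ := Set.not_subset.mp hnsub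
  have hab : a0 ≠ b0 := fun h => hb0a (by simp [h])
  obtain ⟨z, hz, hBne, hBconn⟩ := exists_noncut hconnA ha0 hb0 hab
  obtain ⟨w1, hw1⟩ := hBne
  obtain ⟨w0, hw0A, hw0z, hzw0⟩ :=
    exists_adj_in _ hconnA hz hw1.1 (fun h => hw1.2 (by simp [h]))
  have hw0B : w0 ∈ X (Sum.inr j) \ {z} := ⟨hw0A, hw0z⟩
  by_cases hEu : ∃ x ∈ X (Sum.inr j) \ {z}, ∃ y ∈ X (Sum.inl 0), G.Adj x y
  · by_cases hEv : ∃ x ∈ X (Sum.inr j) \ {z}, ∃ y ∈ X (Sum.inl 1), G.Adj x y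
    · refine shrink_contra hX hmin1 j (X (Sum.inr j) \ {z}) Set.diff_subset z hz (fun h => h.2 rfl)
        ⟨w0, hw0B⟩ hBconn ?_
      intro i
      fin_cases i
      exacts [hEu, hEv]
    · exact move_contra hX hmin2 j 0 1 (by decide) z hz hBconn w0 hw0B hzw0 hEu hEv
  · by_cases hEv : ∃ x ∈ X (Sum.inr j) \ {z}, ∃ y ∈ X (Sum.inl 1), G.Adj x y
    · exact move_contra hX hmin2 j 1 0 (by decide) z hz hBconn w0 hw0B hzw0 hEv hEu
    · have hzadj : ∀ i : Fin 2, ∃ x ∈ ({z} : Set V), ∃ y ∈ X (Sum.inl i), G.Adj x y := by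
        intro i
        have hN : ¬ ∃ x ∈ X (Sum.inr j) \ {z}, ∃ y ∈ X (Sum.inl i), G.Adj x y := by
          fin_cases i
          exacts [hEu, hEv]
        obtain ⟨x, hx, y, hy, hxy⟩ :=
          (hX.2.2.2 (show (Sum.inr j : Fin 2 ⊕ Fin 3) ≠ Sum.inl i by simp)).mpr
            (K23_adj_rl j i)
        rcases eq_or_ne x z with rfl | hxz
        · exact ⟨x, rfl, y, hy, hxy⟩
        · exact absurd ⟨x, ⟨hx, hxz⟩, y, hy, hxy⟩ hN
      exact shrink_contra hX hmin1 j {z} (Set.singleton_subset_iff.mpr hz) w0 hw0A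
        (fun h => hw0z (Set.mem_singleton_iff.mp h)) ⟨z, rfl⟩
        (singleton_induce_connected G z) hzadj
end

section
/- For any positive integer q, a graph G does not contain the complete bipartite graph K_{2,q} as an induced minor if and only if every minimal separator of G induces a subgraph with independence number strictly less than q. -/
open SimpleGraph

universe u v

namespace Stmt12Aux
variable {V : Type u} {G : SimpleGraph V}

lemma walk_in_set {s : Set V} (h : (G.induce s).Connected)
    {x y : V} (hx : x ∈ s) (hy : y ∈ s) : ∃ p : G.Walk x y, ∀ z ∈ p.support, z ∈ s := by
  obtain ⟨q⟩ := h.preconnected ⟨x, hx⟩ ⟨y, hy⟩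
  refine ⟨q.map ⟨Subtype.val, fun h => h⟩, fun z hz => ?_⟩
  rw [Walk.support_map] at hz
  obtain ⟨⟨z', hz'⟩, _, rfl⟩ := List.mem_map.1 hz
  exact hz'

lemma reachable_induce {s : Set V} :
    ∀ {x y : V} (p : G.Walk x y), (∀ z ∈ p.support, z ∈ s) →
      ∀ (hx : x ∈ s) (hy : y ∈ s), (G.induce s).Reachable ⟨x, hx⟩ ⟨y, hy⟩ := by
  intro x y p
  induction p with
  | nil => intro _ hx hy; exact ⟨Walk.nil⟩
  | @cons x x' y a q ih =>
      intro h hx hy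
      have hx' : x' ∈ s := h _ (by simp)
      have hadj : (G.induce s).Adj ⟨x, hx⟩ ⟨x', hx'⟩ := a
      exact hadj.reachable.trans (ih (fun z hz => h z (by simp [hz])) hx' hy)

/-- The set of vertices reachable from `t` by a walk avoiding `S`. -/
def Cset (G : SimpleGraph V) (S : Set V) (t : V) : Set V :=
  {x | ∃ p : G.Walk t x, ∀ z ∈ p.support, z ∉ S}

variable {S : Set V} {t u v : V}

lemma self_mem_Cset (ht : t ∉ S) : t ∈ Cset G S t :=
  ⟨Walk.nil, by simp [ht]⟩

lemma not_mem_S_of_mem_Cset (hx : u ∈ Cset G S t) : u ∉ S := by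
  obtain ⟨p, hp⟩ := hx
  exact hp u p.end_mem_support

lemma Cset_closed (hx : u ∈ Cset G S t) (hadj : G.Adj u v) (hv : v ∉ S) :
    v ∈ Cset G S t := by
  obtain ⟨p, hp⟩ := hx
  refine ⟨p.append (Walk.cons hadj Walk.nil), fun z hz => ?_⟩
  rw [Walk.support_append] at hz
  rcases List.mem_append.1 hz with h | h
  · exact hp z h
  · simp at h; subst h; exact hv

lemma Cset_connected [DecidableEq V] (ht : t ∉ S) : (G.induce (Cset G S t)).Connected := by
  have hmem : ∀ {x : V} (p : G.Walk t x), (∀ z ∈ p.support, z ∉ S) →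
      ∀ z ∈ p.support, z ∈ Cset G S t := by
    intro x p hp z hz
    exact ⟨p.takeUntil z hz, fun w hw => hp w (Walk.support_takeUntil_subset _ _ hw)⟩
  haveI : Nonempty ↑(Cset G S t) := ⟨⟨t, self_mem_Cset ht⟩⟩
  refine ⟨fun ⟨x, hx⟩ ⟨y, hy⟩ => ?_⟩
  obtain ⟨p, hp⟩ := hx
  obtain ⟨q, hq⟩ := hy
  have r1 := reachable_induce p (hmem p hp) (self_mem_Cset ht) ⟨p, hp⟩
  have r2 := reachable_induce q (hmem q hq) (self_mem_Cset ht) ⟨q, hq⟩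
  exact r1.symm.trans r2

lemma sep_symm (h : Separates G S u v) : Separates G S v u := by
  refine ⟨h.2.1, h.1, fun p => ?_⟩
  obtain ⟨w, hw, hwS⟩ := h.2.2 p.reverse
  exact ⟨w, by simpa using hw, hwS⟩

/-- no walk avoiding S between the two sides -/
lemma no_cross (hsep : Separates G S u v) {x y : V} (hx : x ∈ Cset G S u)
    (hy : y ∈ Cset G S v) (p : G.Walk x y) (hp : ∀ z ∈ p.support, z ∉ S) : False := by
  obtain ⟨p₁, hp₁⟩ := hx
  obtain ⟨p₂, hp₂⟩ := hy
  obtain ⟨w, hw, hwS⟩ := hsep.2.2 ((p₁.append p).append p₂.reverse)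
  rw [Walk.support_append, Walk.support_append] at hw
  rcases List.mem_append.1 hw with h | h
  · rcases List.mem_append.1 h with h | h
    · exact hp₁ w h hwS
    · exact hp w (List.mem_of_mem_tail h) hwS
  · have : w ∈ p₂.support := by
      have := List.mem_of_mem_tail h
      simpa using this
    exact hp₂ w this hwS

lemma disj_Cset (hsep : Separates G S u v) : Disjoint (Cset G S u) (Cset G S v) := by
  rw [Set.disjoint_left]
  intro x hx hy
  exact no_cross hsep hx hy Walk.nil (by simp [not_mem_S_of_mem_Cset hx])

lemma no_adj_Cset (hsep : Separates G S u v) {x y : V} (hx : x ∈ Cset G S u)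
    (hy : y ∈ Cset G S v) (hadj : G.Adj x y) : False := by
  refine no_cross hsep hx hy (Walk.cons hadj Walk.nil) ?_
  intro z hz
  simp at hz
  rcases hz with rfl | rfl
  · exact not_mem_S_of_mem_Cset hx
  · exact not_mem_S_of_mem_Cset hy

/-- every vertex of a minimal separator has a neighbor in the `u`-side component -/
lemma neighbor_in_Cset (hsep : Separates G S u v)
    (hmin : ∀ T ⊆ S, Separates G T u v → T = S) {s : V} (hs : s ∈ S) :
    ∃ x ∈ Cset G S u, G.Adj x s := by
  by_contra hno
  push_neg at hno
  have key : ∀ {x y : V} (p : G.Walk x y), y = v → x ∈ Cset G S u →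
      ∃ w ∈ p.support, w ∈ S \ {s} := by
    intro x y p
    induction p with
    | nil =>
        rintro rfl hx
        obtain ⟨p, hp⟩ := hx
        obtain ⟨w, hw, hwS⟩ := hsep.2.2 p
        exact absurd hwS (hp w hw)
    | @cons x x' y a q ih =>
        rintro rfl hx
        by_cases hx' : x' ∈ S
        · refine ⟨x', by simp, hx', ?_⟩
          rintro rfl
          exact hno x hx a
        · obtain ⟨w, hw, hwS⟩ := ih rfl (Cset_closed hx a hx')
          exact ⟨w, by simp [hw], hwS⟩
  have hsep' : Separates G (S \ {s}) u v := by
    refine ⟨fun h => hsep.1 h.1, fun h => hsep.2.1 h.1, fun p => ?_⟩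
    exact key p rfl (self_mem_Cset hsep.1)
  have := hmin (S \ {s}) Set.diff_subset hsep'
  have : s ∈ S \ {s} := by rw [this]; exact hs
  simp at this

lemma singleton_induce_connected (G : SimpleGraph V) (x : V) :
    (G.induce ({x} : Set V)).Connected := by
  haveI : Nonempty ↑({x} : Set V) := ⟨⟨x, rfl⟩⟩
  refine ⟨fun ⟨a, ha⟩ ⟨b, hb⟩ => ?_⟩
  simp only [Set.mem_singleton_iff] at ha hb
  subst ha; subst hb
  exact Reachable.refl _

lemma model_of_separator [Fintype V] {S : Set V} {q : ℕ}
    (hS : IsMinimalSeparator G S) {A : Set V} (hAS : A ⊆ S) (hA : _root_.IsIndepSet G A)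
    (hq : q ≤ A.ncard) : HasInducedMinor (completeBipartiteGraph (Fin 2) (Fin q)) G := by
  classical
  obtain ⟨u, v, hsep, hmin⟩ := hS
  obtain ⟨B, hBA, hBcard⟩ := Set.exists_subset_card_eq hq
  have hBfin : B.Finite := Set.toFinite B
  have hBtf : hBfin.toFinset.card = q := by
    rw [← Set.ncard_eq_toFinset_card B hBfin]; exact hBcard
  let e : ↥hBfin.toFinset ≃ Fin q := Finset.equivFinOfCardEq hBtf
  let a : Fin q → V := fun i => ((e.symm i : ↥hBfin.toFinset) : V)
  have ha_mem : ∀ i, a i ∈ A := fun i => hBA (hBfin.mem_toFinset.1 (e.symm i).2)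
  have ha_inj : Function.Injective a := fun i j h => by
    have : e.symm i = e.symm j := Subtype.ext h
    simpa using congrArg e this
  have hmin' : ∀ T ⊆ S, Separates G T v u → T = S :=
    fun T hT h => hmin T hT (sep_symm h)
  have hsep' : Separates G S v u := sep_symm hsep
  have hu : u ∉ S := hsep.1
  have hv : v ∉ S := hsep.2.1
  refine ⟨Sum.elim (fun i => Cset G S (if i = 0 then u else v)) (fun j => {a j}),
    ?_, ?_, ?_, ?_⟩
  · rintro (i | j)
    · by_cases hi : i = 0 <;> simp only [Sum.elim_inl, hi, if_pos, if_neg, Ne,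
        not_false_iff, reduceIte]
      · exact ⟨u, self_mem_Cset hu⟩
      · exact ⟨v, self_mem_Cset hv⟩
    · exact ⟨a j, rfl⟩
  · rintro (i | j)
    · simp only [Sum.elim_inl]
      by_cases hi : i = 0
      · rw [if_pos hi]; exact Cset_connected hu
      · rw [if_neg hi]; exact Cset_connected hv
    · exact singleton_induce_connected G (a j)
  · rintro (i | j) (i' | j') hne
    · have hii : i ≠ i' := fun h => hne (by rw [h])
      have : Disjoint (Cset G S u) (Cset G S v) := disj_Cset hsep
      have h2 : Disjoint (Cset G S v) (Cset G S u) := disj_Cset hsep'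
      fin_cases i <;> fin_cases i' <;> simp_all
    · simp only [Sum.elim_inl, Sum.elim_inr]
      rw [Set.disjoint_right]
      rintro x rfl hx
      exact not_mem_S_of_mem_Cset hx (hAS (ha_mem j'))
    · simp only [Sum.elim_inl, Sum.elim_inr]
      rw [Set.disjoint_left]
      rintro x rfl hx
      exact not_mem_S_of_mem_Cset hx (hAS (ha_mem j))
    · have hjj : j ≠ j' := fun h => hne (by rw [h])
      simp only [Sum.elim_inr, Set.disjoint_singleton]
      exact fun h => hjj (ha_inj h)
  · rintro (i | j) (i' | j') hne
    · have hii : i ≠ i' := fun h => hne (by rw [h])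
      simp only [Sum.elim_inl]
      rw [iff_false_intro (by simp [completeBipartiteGraph] :
        ¬ (completeBipartiteGraph (Fin 2) (Fin q)).Adj (.inl i) (.inl i'))]
      simp only [iff_false]
      rintro ⟨x, hx, y, hy, hxy⟩
      fin_cases i <;> fin_cases i' <;> simp_all
      · exact no_adj_Cset hsep hx hy hxy
      · exact no_adj_Cset hsep' hx hy hxy
    · simp only [Sum.elim_inl, Sum.elim_inr]
      rw [iff_true_intro (by simp [completeBipartiteGraph] :
        (completeBipartiteGraph (Fin 2) (Fin q)).Adj (.inl i) (.inr j'))]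
      simp only [iff_true]
      have hsj : a j' ∈ S := hAS (ha_mem j')
      by_cases hi : i = 0 <;> simp only [hi, reduceIte]
      · obtain ⟨x, hx, hadj⟩ := neighbor_in_Cset hsep hmin hsj
        exact ⟨x, hx, a j', rfl, hadj⟩
      · obtain ⟨x, hx, hadj⟩ := neighbor_in_Cset hsep' hmin' hsj
        exact ⟨x, hx, a j', rfl, hadj⟩
    · simp only [Sum.elim_inl, Sum.elim_inr]
      rw [iff_true_intro (by simp [completeBipartiteGraph] :
        (completeBipartiteGraph (Fin 2) (Fin q)).Adj (.inr j) (.inl i'))]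
      simp only [iff_true]
      have hsj : a j ∈ S := hAS (ha_mem j)
      by_cases hi : i' = 0 <;> simp only [hi, reduceIte]
      · obtain ⟨x, hx, hadj⟩ := neighbor_in_Cset hsep hmin hsj
        exact ⟨a j, rfl, x, hx, hadj.symm⟩
      · obtain ⟨x, hx, hadj⟩ := neighbor_in_Cset hsep' hmin' hsj
        exact ⟨a j, rfl, x, hx, hadj.symm⟩
    · have hjj : j ≠ j' := fun h => hne (by rw [h])
      simp only [Sum.elim_inr]
      rw [iff_false_intro (by simp [completeBipartiteGraph] :
        ¬ (completeBipartiteGraph (Fin 2) (Fin q)).Adj (.inr j) (.inr j'))]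
      simp only [iff_false]
      rintro ⟨x, rfl, y, rfl, hxy⟩
      exact hA _ (ha_mem j) _ (ha_mem j') (fun h => hjj (ha_inj h)) hxy

lemma separator_of_model [Fintype V] {q : ℕ}
    (h : HasInducedMinor (completeBipartiteGraph (Fin 2) (Fin q)) G) :
    ∃ S : Set V, IsMinimalSeparator G S ∧ ∃ A ⊆ S, _root_.IsIndepSet G A ∧ A.ncard = q := by
  classical
  obtain ⟨X, hne, hconn, hdisj, hadj⟩ := h
  obtain ⟨u, hu⟩ := hne (.inl 0)
  obtain ⟨v, hv⟩ := hne (.inl 1)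
  have h01 : (Sum.inl 0 : Fin 2 ⊕ Fin q) ≠ Sum.inl 1 := by
    simp [Fin.ext_iff]
  have hd12 : Disjoint (X (.inl 0)) (X (.inl 1)) := hdisj h01
  have hnadj12 : ¬ ∃ x ∈ X (.inl 0), ∃ y ∈ X (.inl 1), G.Adj x y := by
    intro hh
    have := (hadj h01).1 hh
    simp [completeBipartiteGraph] at this
  set S₀ : Set V := {x | x ∉ X (.inl 0) ∧ x ∉ X (.inl 1)} with hS₀
  have sep₀ : Separates G S₀ u v := by
    refine ⟨fun h => h.1 hu, fun h => h.2 hv, ?_⟩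
    have key : ∀ {x y : V} (p : G.Walk x y), y = v → x ∈ X (.inl 0) →
        ∃ w ∈ p.support, w ∈ S₀ := by
      intro x y p
      induction p with
      | nil =>
          rintro rfl hx
          exact absurd hv (Set.disjoint_left.1 hd12 hx)
      | @cons x x' y a q ih =>
          rintro rfl hx
          by_cases h1 : x' ∈ X (.inl 0)
          · obtain ⟨w, hw, hwS⟩ := ih rfl h1
            exact ⟨w, by simp [hw], hwS⟩
          · by_cases h2 : x' ∈ X (.inl 1)
            · exact absurd ⟨x, hx, x', h2, a⟩ hnadj12
            · exact ⟨x', by simp, h1, h2⟩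
    exact fun p => key p rfl hu
  have hfin : ({T : Set V | T ⊆ S₀ ∧ Separates G T u v}).Finite := Set.toFinite _
  obtain ⟨T, ⟨hTsub, hTsep⟩, hTmin⟩ :=
    Set.Finite.exists_minimalFor Set.ncard _ hfin ⟨S₀, subset_rfl, sep₀⟩
  have hms : IsMinimalSeparator G T := by
    refine ⟨u, v, hTsep, fun T' hT' hT'sep => ?_⟩
    have hcard := hTmin (j := T') ⟨hT'.trans hTsub, hT'sep⟩
      (Set.ncard_le_ncard hT' (Set.toFinite T))
    exact Set.eq_of_subset_of_ncard_le hT' hcard (Set.toFinite T)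
  have hpick : ∀ i : Fin q, ∃ w ∈ T, w ∈ X (.inr i) := by
    intro i
    obtain ⟨x₁, hx₁, y₁, hy₁, hxy₁⟩ := (hadj (show (Sum.inl 0 : Fin 2 ⊕ Fin q) ≠ .inr i
      by simp)).2 (by simp [completeBipartiteGraph])
    obtain ⟨y₂, hy₂, x₂, hx₂, hxy₂⟩ := (hadj (show (Sum.inr i : Fin 2 ⊕ Fin q) ≠ .inl 1
      by simp)).2 (by simp [completeBipartiteGraph])
    obtain ⟨p₁, hp₁⟩ := walk_in_set (hconn (.inl 0)) hu hx₁
    obtain ⟨p₂, hp₂⟩ := walk_in_set (hconn (.inr i)) hy₁ hy₂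
    obtain ⟨p₃, hp₃⟩ := walk_in_set (hconn (.inl 1)) hx₂ hv
    obtain ⟨w, hw, hwT⟩ := hTsep.2.2 (p₁.append (Walk.cons hxy₁ (p₂.append (Walk.cons hxy₂ p₃))))
    refine ⟨w, hwT, ?_⟩
    have hwS₀ : w ∈ S₀ := hTsub hwT
    simp only [Walk.support_append, Walk.support_cons, List.tail_cons, List.mem_append] at hw
    rcases hw with h | h | h
    · exact absurd (hp₁ w h) hwS₀.1
    · exact hp₂ w h
    · exact absurd (hp₃ w h) hwS₀.2
  choose a haT haX using hpick
  have ha_inj : Function.Injective a := by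
    intro i j hij
    by_contra hne'
    have hne2 : (Sum.inr i : Fin 2 ⊕ Fin q) ≠ .inr j := by simp [hne']
    exact Set.disjoint_left.1 (hdisj hne2) (haX i) (hij ▸ haX j)
  refine ⟨T, hms, Set.range a, ?_, ?_, ?_⟩
  · rintro x ⟨i, rfl⟩; exact haT i
  · rintro x ⟨i, rfl⟩ y ⟨j, rfl⟩ hne' hadj'
    have hij : i ≠ j := fun h => hne' (by rw [h])
    have : (completeBipartiteGraph (Fin 2) (Fin q)).Adj (.inr i) (.inr j) :=
      (hadj (show (Sum.inr i : Fin 2 ⊕ Fin q) ≠ .inr j by simp [hij])).1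
        ⟨a i, haX i, a j, haX j, hadj'⟩
    simp [completeBipartiteGraph] at this
  · rw [← Set.image_univ, Set.ncard_image_of_injective _ ha_inj, Set.ncard_univ,
      Nat.card_eq_fintype_card, Fintype.card_fin]

end Stmt12Aux

/-- For every positive integer `q`, a graph has no `K_{2,q}` induced minor iff every
minimal separator induces a subgraph with independence number less than `q`. -/
theorem stmt12 {V : Type u} [Fintype V] (G : SimpleGraph V) (q : ℕ) (hq : 0 < q) :
    ¬ HasInducedMinor (completeBipartiteGraph (Fin 2) (Fin q)) G ↔
      ∀ S : Set V, IsMinimalSeparator G S →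
        ∀ A ⊆ S, _root_.IsIndepSet G A → A.ncard < q := by
  constructor
  · intro hNo S hS A hAS hA
    by_contra hlt
    push_neg at hlt
    exact hNo (Stmt12Aux.model_of_separator hS hAS hA hlt)
  · intro hProp hHIM
    obtain ⟨S, hms, A, hAS, hind, hcard⟩ := Stmt12Aux.separator_of_model hHIM
    have := hProp S hms A hAS hind
    omega
end

section
/- Every minimal separator of a graph G induces a subgraph with independence number at most 2 if and only if G does not contain K_{2,3} as an induced minor. -/
open SimpleGraph

universe u v

section Aux
variable {V : Type u} {G : SimpleGraph V}

/-- The set of vertices reachable from `u` by walks avoiding `S`. -/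
def AvSet (G : SimpleGraph V) (S : Set V) (u : V) : Set V :=
  {w | ∃ p : G.Walk u w, ∀ x ∈ p.support, x ∉ S}

lemma avset_self {S : Set V} {u : V} (hu : u ∉ S) : u ∈ AvSet G S u :=
  ⟨SimpleGraph.Walk.nil, by simp [hu]⟩

lemma avset_not_mem {S : Set V} {u w : V} (hw : w ∈ AvSet G S u) : w ∉ S := by
  obtain ⟨p, hp⟩ := hw
  exact hp w p.end_mem_support

lemma avset_adj {S : Set V} {u w y : V} (hw : w ∈ AvSet G S u) (hadj : G.Adj w y)
    (hy : y ∉ S) : y ∈ AvSet G S u := by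
  obtain ⟨p, hp⟩ := hw
  refine ⟨p.concat hadj, ?_⟩
  intro x hx
  rw [SimpleGraph.Walk.support_concat, List.mem_append] at hx
  rcases hx with hx | hx
  · exact hp x hx
  · simpa using fun h => hy (by simp_all)

lemma avset_support_subset {S : Set V} {u w : V} (p : G.Walk u w)
    (hp : ∀ x ∈ p.support, x ∉ S) : ∀ x ∈ p.support, x ∈ AvSet G S u := by
  classical
  intro x hx
  exact ⟨p.takeUntil x hx, fun y hy => hp y (p.support_takeUntil_subset hx hy)⟩

lemma avset_walk_between {S : Set V} {u w w' : V} (hw : w ∈ AvSet G S u)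
    (hw' : w' ∈ AvSet G S u) : ∃ p : G.Walk w w', ∀ x ∈ p.support, x ∉ S := by
  obtain ⟨p, hp⟩ := hw
  obtain ⟨q, hq⟩ := hw'
  refine ⟨p.reverse.append q, ?_⟩
  intro x hx
  rw [SimpleGraph.Walk.mem_support_append_iff] at hx
  rcases hx with hx | hx
  · exact hp x (by rwa [SimpleGraph.Walk.support_reverse, List.mem_reverse] at hx)
  · exact hq x hx

/-- A walk whose support lies in `T` yields reachability in the induced graph. -/
lemma induce_reachable_of_walk {T : Set V} {a b : V} (p : G.Walk a b)
    (hsup : ∀ x ∈ p.support, x ∈ T) :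
    (G.induce T).Reachable ⟨a, hsup a p.start_mem_support⟩ ⟨b, hsup b p.end_mem_support⟩ := by
  induction p with
  | nil => exact SimpleGraph.Reachable.refl _
  | @cons x y z h q ih =>
    have hx : x ∈ T := hsup x (by simp)
    have hy : y ∈ T := hsup y (by simp)
    have hsup' : ∀ w ∈ q.support, w ∈ T := fun w hw => hsup w (by simp [hw])
    have hadj : (G.induce T).Adj ⟨x, hx⟩ ⟨y, hy⟩ := by simpa using h
    exact hadj.reachable.trans (ih hsup')

/-- Extract a walk in `G` with support in `T` from reachability in the induced graph. -/
lemma walk_of_induce_reachable {T : Set V} {a b : V} {ha : a ∈ T} {hb : b ∈ T}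
    (h : (G.induce T).Reachable ⟨a, ha⟩ ⟨b, hb⟩) :
    ∃ p : G.Walk a b, ∀ x ∈ p.support, x ∈ T := by
  obtain ⟨q⟩ := h
  refine ⟨q.map (SimpleGraph.Embedding.induce T).toHom, ?_⟩
  intro x hx
  have hx' : x ∈ List.map (SimpleGraph.Embedding.induce (G := G) T).toHom q.support := by
    rw [← SimpleGraph.Walk.support_map]; exact hx
  rw [List.mem_map] at hx'
  obtain ⟨⟨y, hy⟩, -, rfl⟩ := hx'
  exact hy

/-- Crossing lemma: a walk from inside `T` to outside `T` has an edge leaving `T`,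
with the outside endpoint on the walk. -/
lemma crossing {T : Set V} : ∀ {a b : V} (p : G.Walk a b), a ∈ T → b ∉ T →
    ∃ x y : V, G.Adj x y ∧ x ∈ T ∧ y ∉ T ∧ y ∈ p.support := by
  intro a b p
  induction p with
  | nil => intro ha hb; exact absurd ha hb
  | @cons x y z h q ih =>
    intro hx hz
    by_cases hy : y ∈ T
    · obtain ⟨x', y', h1, h2, h3, h4⟩ := ih hy hz
      exact ⟨x', y', h1, h2, h3, by simp [h4]⟩
    · exact ⟨x, y, h, hx, hy, by simp⟩

end Aux

section Aux2
variable {V : Type u} {G : SimpleGraph V}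

lemma separates_symm {S : Set V} {u v : V} (h : Separates G S u v) : Separates G S v u := by
  obtain ⟨h1, h2, h3⟩ := h
  refine ⟨h2, h1, fun p => ?_⟩
  obtain ⟨w, hw1, hw2⟩ := h3 p.reverse
  rw [SimpleGraph.Walk.support_reverse, List.mem_reverse] at hw1
  exact ⟨w, hw1, hw2⟩

/-- In a minimal separator, every vertex has a neighbor in the component of `u`. -/
lemma min_sep_neighbor {S : Set V} {u v s : V} (hsep : Separates G S u v)
    (hmin : ∀ T ⊆ S, Separates G T u v → T = S) (hs : s ∈ S) :
    ∃ x ∈ AvSet G S u, G.Adj x s := by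
  by_contra h
  push_neg at h
  have hT : Separates G (S \ {s}) u v := by
    refine ⟨fun hu => hsep.1 hu.1, fun hv => hsep.2.1 hv.1, ?_⟩
    intro p
    have hu : u ∈ AvSet G S u := avset_self hsep.1
    have hv : v ∉ AvSet G S u := by
      intro hv
      obtain ⟨q, hq⟩ := hv
      obtain ⟨w, hw1, hw2⟩ := hsep.2.2 q
      exact hq w hw1 hw2
    obtain ⟨x, y, hadj, hx, hy, hysupp⟩ := crossing p hu hv
    have hyS : y ∈ S := by
      by_contra hyS
      exact hy (avset_adj hx hadj hyS)
    have hys : y ≠ s := by rintro rfl; exact h x hx hadj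
    exact ⟨y, hysupp, hyS, hys⟩
  have heq := hmin _ Set.diff_subset hT
  have : s ∈ S \ {s} := by rw [heq]; exact hs
  simp at this

lemma avset_connected {S : Set V} {u : V} (hu : u ∉ S) :
    (G.induce (AvSet G S u)).Connected := by
  have huA : u ∈ AvSet G S u := avset_self hu
  have key : ∀ w : ↥(AvSet G S u), (G.induce (AvSet G S u)).Reachable ⟨u, huA⟩ w := by
    rintro ⟨w, hw⟩
    obtain ⟨p, hp⟩ := hw
    exact induce_reachable_of_walk p (avset_support_subset p hp)
  rw [SimpleGraph.connected_iff]
  exact ⟨fun w w' => (key w).symm.trans (key w'), ⟨⟨u, huA⟩⟩⟩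

lemma singleton_induce_connected_s13 (x : V) : (G.induce ({x} : Set V)).Connected := by
  rw [SimpleGraph.connected_iff]
  refine ⟨fun a b => ?_, ⟨⟨x, rfl⟩⟩⟩
  have : a = b := Subtype.ext (by
    have ha := a.2; have hb := b.2
    simp only [Set.mem_singleton_iff] at ha hb
    rw [ha, hb])
  rw [this]


/-- From a bad minimal separator, build a `K₂,₃` induced-minor model. -/
lemma model_of_bad_sep {S : Set V} {A : Set V} (hS : IsMinimalSeparator G S)
    (hA : A ⊆ S) (hInd : _root_.IsIndepSet G A) (hc : 3 ≤ A.ncard) :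
    HasInducedMinor K23 G := by
  obtain ⟨t, htA, ht3⟩ := Set.exists_subset_card_eq hc
  obtain ⟨a, b, c, hab, hac, hbc, rfl⟩ := Set.ncard_eq_three.mp ht3
  obtain ⟨u, v, hsep, hmin⟩ := hS
  set abc : Fin 3 → V := ![a, b, c] with habc
  have hmem : ∀ j : Fin 3, abc j ∈ ({a, b, c} : Set V) := by
    intro j; fin_cases j <;> simp [habc]
  have habc_ne : ∀ j k : Fin 3, j ≠ k → abc j ≠ abc k := by
    intro j k hjk
    fin_cases j <;> fin_cases k <;> simp_all [habc] <;> tauto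
  have habc_nadj : ∀ j k : Fin 3, j ≠ k → ¬ G.Adj (abc j) (abc k) := fun j k hjk =>
    hInd _ (htA (hmem j)) _ (htA (hmem k)) (habc_ne j k hjk)
  have habcS : ∀ j, abc j ∈ S := fun j => hA (htA (hmem j))
  set Cu := AvSet G S u with hCu
  set Cv := AvSet G S v with hCv
  have huC : u ∈ Cu := avset_self hsep.1
  have hvC : v ∈ Cv := avset_self hsep.2.1
  have hdisjC : ∀ w, w ∈ Cu → w ∈ Cv → False := by
    intro w h1 h2
    obtain ⟨p, hp⟩ := h1
    obtain ⟨q, hq⟩ := h2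
    obtain ⟨w', hw1, hw2⟩ := hsep.2.2 (p.append q.reverse)
    rw [SimpleGraph.Walk.mem_support_append_iff] at hw1
    rcases hw1 with h | h
    · exact hp w' h hw2
    · rw [SimpleGraph.Walk.support_reverse, List.mem_reverse] at h
      exact hq w' h hw2
  have hnoedge : ∀ x ∈ Cu, ∀ y ∈ Cv, ¬ G.Adj x y := by
    intro x hx y hy e
    exact hdisjC y (avset_adj hx e (avset_not_mem hy)) hy
  have hnbu : ∀ s ∈ S, ∃ x ∈ Cu, G.Adj x s := fun s hs => min_sep_neighbor hsep hmin hs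
  have hnbv : ∀ s ∈ S, ∃ x ∈ Cv, G.Adj x s := fun s hs =>
    min_sep_neighbor (separates_symm hsep)
      (fun T hT hsepT => hmin T hT (separates_symm hsepT)) hs
  have hCuCv : Disjoint Cu Cv := Set.disjoint_left.mpr fun w h1 h2 => hdisjC w h1 h2
  have hCuS : ∀ j, Disjoint Cu {abc j} :=
    fun j => Set.disjoint_singleton_right.mpr fun h => avset_not_mem h (habcS j)
  have hCvS : ∀ j, Disjoint Cv {abc j} :=
    fun j => Set.disjoint_singleton_right.mpr fun h => avset_not_mem h (habcS j)
  refine ⟨Sum.elim (fun i : Fin 2 => if i = 0 then Cu else Cv) (fun j => {abc j}),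
    ?_, ?_, ?_, ?_⟩
  · rintro (i | j)
    · fin_cases i <;> simp only [Sum.elim_inl] <;> norm_num
      · exact ⟨u, huC⟩
      · exact ⟨v, hvC⟩
    · exact ⟨abc j, rfl⟩
  · rintro (i | j)
    · fin_cases i <;> simp only [Sum.elim_inl] <;> norm_num
      · exact avset_connected (G := G) hsep.1
      · exact avset_connected (G := G) hsep.2.1
    · exact singleton_induce_connected_s13 _
  · rintro (i | j) (i' | j') hne
    · have hii : i ≠ i' := fun h => hne (congrArg Sum.inl h)
      fin_cases i <;> fin_cases i' <;> simp only [Sum.elim_inl] <;> norm_num <;>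
        first
          | exact absurd rfl hii
          | exact hCuCv
          | exact hCuCv.symm
    · fin_cases i <;> simp only [Sum.elim_inl, Sum.elim_inr] <;> norm_num <;>
        exact fun h => avset_not_mem h (habcS j')
    · fin_cases i' <;> simp only [Sum.elim_inl, Sum.elim_inr] <;> norm_num <;>
        exact fun h => avset_not_mem h (habcS j)
    · have hjj : j ≠ j' := fun h => hne (congrArg Sum.inr h)
      simp only [Sum.elim_inr]
      exact Set.disjoint_singleton.mpr (habc_ne j j' hjj)
  · rintro (i | j) (i' | j') hne
    · have hii : i ≠ i' := fun h => hne (congrArg Sum.inl h)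
      have hK : ¬ K23.Adj (Sum.inl i) (Sum.inl i') := by simp [K23]
      simp only [Sum.elim_inl, iff_false_intro hK, iff_false]
      push_neg
      intro x hx y hy
      fin_cases i <;> fin_cases i' <;> norm_num at hx hy ⊢ <;>
        first
          | exact absurd rfl hii
          | exact hnoedge x hx y hy
          | exact fun e => hnoedge y hy x hx e.symm
    · have hK : K23.Adj (Sum.inl i) (Sum.inr j') := by simp [K23]
      simp only [Sum.elim_inl, Sum.elim_inr, iff_true_intro hK, iff_true]
      fin_cases i <;> norm_num
      · obtain ⟨x, hx, e⟩ := hnbu (abc j') (habcS j')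
        exact ⟨x, hx, e⟩
      · obtain ⟨x, hx, e⟩ := hnbv (abc j') (habcS j')
        exact ⟨x, hx, e⟩
    · have hK : K23.Adj (Sum.inr j) (Sum.inl i') := by simp [K23]
      simp only [Sum.elim_inl, Sum.elim_inr, iff_true_intro hK, iff_true]
      fin_cases i' <;> norm_num
      · obtain ⟨x, hx, e⟩ := hnbu (abc j) (habcS j)
        exact ⟨x, hx, e.symm⟩
      · obtain ⟨x, hx, e⟩ := hnbv (abc j) (habcS j)
        exact ⟨x, hx, e.symm⟩
    · have hjj : j ≠ j' := fun h => hne (congrArg Sum.inr h)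
      have hK : ¬ K23.Adj (Sum.inr j) (Sum.inr j') := by simp [K23]
      simp only [Sum.elim_inr, iff_false_intro hK, iff_false]
      push_neg
      intro x hx y hy
      rw [Set.mem_singleton_iff] at hx hy
      rw [hx, hy]
      exact habc_nadj j j' hjj

end Aux2

section Aux3
variable {V : Type u} {G : SimpleGraph V}

/-- From a `K₂,₃` induced-minor model, produce a minimal separator containing an
independent set of size 3. -/
lemma bad_sep_of_model {X : Fin 2 ⊕ Fin 3 → Set V} (hm : InducedMinorModel K23 G X) :
    ∃ S : Set V, IsMinimalSeparator G S ∧ ∃ A ⊆ S, _root_.IsIndepSet G A ∧ A.ncard = 3 := by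
  classical
  obtain ⟨hne, hconn, hdisj, hadj⟩ := hm
  obtain ⟨u, hu⟩ := hne (Sum.inl 0)
  obtain ⟨v, hv⟩ := hne (Sum.inl 1)
  have h01 : (Sum.inl 0 : Fin 2 ⊕ Fin 3) ≠ Sum.inl 1 := by decide
  have hB1B2 : ∀ x ∈ X (Sum.inl 0), ∀ y ∈ X (Sum.inl 1), ¬ G.Adj x y := by
    intro x hx y hy e
    have := (hadj h01).mp ⟨x, hx, y, hy, e⟩
    simp [K23] at this
  have hvB1 : v ∉ X (Sum.inl 0) := fun h => Set.disjoint_left.mp (hdisj h01) h hv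
  set S' : Set V := {s | s ∉ X (Sum.inl 0) ∧ ∃ x ∈ X (Sum.inl 0), G.Adj x s} with hS'
  have huS' : u ∉ S' := fun h => h.1 hu
  have hS'B2 : ∀ s ∈ S', s ∉ X (Sum.inl 1) := by
    rintro s ⟨h1, x, hx, e⟩ hs2
    exact hB1B2 x hx s hs2 e
  have hsepS' : ∀ p : G.Walk u v, ∃ w ∈ p.support, w ∈ S' := by
    intro p
    obtain ⟨x, y, hxy, hx, hy, hys⟩ := crossing p hu hvB1
    exact ⟨y, hys, hy, x, hx, hxy⟩
  set D := AvSet G S' v with hD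
  have hvD : v ∈ D := avset_self (fun h => hS'B2 v h hv)
  set S'' : Set V := {s | s ∈ S' ∧ ∃ y ∈ D, G.Adj s y} with hS''
  have hS''sub : S'' ⊆ S' := fun s hs => hs.1
  have hsepS'' : ∀ p : G.Walk u v, ∃ w ∈ p.support, w ∈ S'' := by
    intro p
    have huD : u ∉ D := by
      intro hu'
      obtain ⟨q, hq⟩ := hu'
      obtain ⟨w, hw1, hw2⟩ := hsepS' q.reverse
      rw [SimpleGraph.Walk.support_reverse, List.mem_reverse] at hw1
      exact hq w hw1 hw2
    obtain ⟨x, y, hxy, hxD, hyD, hys⟩ := crossing p.reverse hvD huD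
    rw [SimpleGraph.Walk.support_reverse, List.mem_reverse] at hys
    have hyS' : y ∈ S' := by
      by_contra h
      exact hyD (avset_adj hxD hxy h)
    exact ⟨y, hys, hyS', x, hxD, hxy.symm⟩
  have hsep : Separates G S'' u v :=
    ⟨fun h => (hS''sub h).1 hu, fun h => hS'B2 v (hS''sub h) hv, hsepS''⟩
  have wlkB1 : ∀ {x y : V}, x ∈ X (Sum.inl 0) → y ∈ X (Sum.inl 0) →
      ∃ p : G.Walk x y, ∀ z ∈ p.support, z ∈ X (Sum.inl 0) := fun hx hy =>
    walk_of_induce_reachable ((hconn (Sum.inl 0)).preconnected ⟨_, hx⟩ ⟨_, hy⟩)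
  have hmin : ∀ T ⊆ S'', Separates G T u v → T = S'' := by
    intro T hT hTsep
    refine Set.Subset.antisymm hT fun s hs => ?_
    by_contra hsT
    obtain ⟨⟨hsB1, x, hx, hxs⟩, y, hyD, hsy⟩ := hs
    obtain ⟨p1, hp1⟩ := wlkB1 hu hx
    obtain ⟨q, hq⟩ := hyD
    have hp3 : ∀ z ∈ q.reverse.support, z ∈ D := by
      intro z hz
      rw [SimpleGraph.Walk.support_reverse, List.mem_reverse] at hz
      exact avset_support_subset q hq z hz
    obtain ⟨w, hw, hwT⟩ := hTsep.2.2
      (p1.append (SimpleGraph.Walk.cons hxs (SimpleGraph.Walk.cons hsy q.reverse)))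
    rw [SimpleGraph.Walk.mem_support_append_iff] at hw
    have hwS' : w ∈ S' := (hT hwT).1
    rcases hw with hw | hw
    · exact hwS'.1 (hp1 w hw)
    · rw [SimpleGraph.Walk.support_cons, List.mem_cons] at hw
      rcases hw with rfl | hw
      · exact hwS'.1 hx
      · rw [SimpleGraph.Walk.support_cons, List.mem_cons] at hw
        rcases hw with rfl | hw
        · exact hsT hwT
        · exact avset_not_mem (hp3 w hw) hwS'
  have key : ∀ i : Fin 3, ∃ a, a ∈ X (Sum.inr i) ∧ a ∈ S'' := by
    intro i
    have hne1 : (Sum.inl 0 : Fin 2 ⊕ Fin 3) ≠ Sum.inr i := by simp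
    have hne2 : (Sum.inr i : Fin 2 ⊕ Fin 3) ≠ Sum.inl 1 := by simp
    obtain ⟨x1, hx1, y1, hy1, e1⟩ := (hadj hne1).mpr (by simp [K23])
    obtain ⟨y2, hy2, x2, hx2, e2⟩ := (hadj hne2).mpr (by simp [K23])
    obtain ⟨pa, hpa⟩ := wlkB1 hu hx1
    obtain ⟨pb, hpb⟩ :=
      walk_of_induce_reachable ((hconn (Sum.inr i)).preconnected ⟨y1, hy1⟩ ⟨y2, hy2⟩)
    obtain ⟨pc, hpc⟩ :=
      walk_of_induce_reachable ((hconn (Sum.inl 1)).preconnected ⟨x2, hx2⟩ ⟨v, hv⟩)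
    obtain ⟨w, hw, hwS⟩ := hsepS''
      (pa.append (SimpleGraph.Walk.cons e1 (pb.append (SimpleGraph.Walk.cons e2 pc))))
    have hwS' : w ∈ S' := hwS.1
    refine ⟨w, ?_, hwS⟩
    rw [SimpleGraph.Walk.mem_support_append_iff] at hw
    rcases hw with hw | hw
    · exact absurd (hpa w hw) hwS'.1
    · rw [SimpleGraph.Walk.support_cons, List.mem_cons] at hw
      rcases hw with rfl | hw
      · exact absurd hx1 hwS'.1
      · rw [SimpleGraph.Walk.mem_support_append_iff] at hw
        rcases hw with hw | hw
        · exact hpb w hw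
        · rw [SimpleGraph.Walk.support_cons, List.mem_cons] at hw
          rcases hw with rfl | hw
          · exact hy2
          · exact absurd (hpc w hw) (hS'B2 w hwS')
  choose φ hφY hφS using key
  have hYY : ∀ i j : Fin 3, i ≠ j → ∀ x ∈ X (Sum.inr i), ∀ y ∈ X (Sum.inr j), ¬ G.Adj x y := by
    intro i j hij x hx y hy e
    have := (hadj (show (Sum.inr i : Fin 2 ⊕ Fin 3) ≠ Sum.inr j from
      fun h => hij (Sum.inr.inj h))).mp ⟨x, hx, y, hy, e⟩
    simp [K23] at this
  have hφne : ∀ i j : Fin 3, i ≠ j → φ i ≠ φ j := by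
    intro i j hij h
    refine Set.disjoint_left.mp (hdisj (fun hh => hij (Sum.inr.inj hh))) (hφY i) ?_
    rw [h]; exact hφY j
  refine ⟨S'', ⟨u, v, hsep, hmin⟩, {φ 0, φ 1, φ 2}, ?_, ?_, ?_⟩
  · intro x hx
    simp only [Set.mem_insert_iff, Set.mem_singleton_iff] at hx
    rcases hx with rfl | rfl | rfl <;> exact hφS _
  · intro x hx y hy hxy e
    simp only [Set.mem_insert_iff, Set.mem_singleton_iff] at hx hy
    rcases hx with rfl | rfl | rfl <;> rcases hy with rfl | rfl | rfl <;>
      first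
        | exact hxy rfl
        | exact hYY _ _ (by decide) _ (hφY _) _ (hφY _) e
  · exact Set.ncard_eq_three.mpr ⟨φ 0, φ 1, φ 2, hφne 0 1 (by decide),
      hφne 0 2 (by decide), hφne 1 2 (by decide), rfl⟩

end Aux3


/-- Every minimal separator of `G` induces a subgraph with independence number at
most 2 iff `G` has no `K_{2,3}` induced minor. -/
theorem stmt13 {V : Type u} [Fintype V] (G : SimpleGraph V) :
    (∀ S : Set V, IsMinimalSeparator G S →
      ∀ A ⊆ S, _root_.IsIndepSet G A → A.ncard ≤ 2) ↔
    ¬ HasInducedMinor K23 G := by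
  constructor
  · rintro hLHS ⟨X, hm⟩
    obtain ⟨S, hS, A, hAS, hind, h3⟩ := bad_sep_of_model hm
    have := hLHS S hS A hAS hind
    omega
  · intro hnm S hS A hA hInd
    by_contra hc
    exact hnm (model_of_bad_sep hS hA hInd (by omega))
end

section
/- In a perfect graph G, a set S of vertices is the union of two cliques if and only if the subgraph induced by S has independence number at most 2. -/
open SimpleGraph

universe u v

section Aux

open SimpleGraph

/-- A graph all of whose closed walks are even is 2-colorable. -/
private lemma aux_colorable_two {W : Type v} (H : SimpleGraph W)
    (h : ∀ (u : W) (p : H.Walk u u), Even p.length) : H.Colorable 2 := by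
  classical
  have par : ∀ {a b : W} (p q : H.Walk a b), (Even p.length ↔ Even q.length) := by
    intro a b p q
    have h2 := h a (p.append q.reverse)
    rw [Walk.length_append, Walk.length_reverse, Nat.even_add] at h2
    exact h2
  have hre : ∀ v : W, H.Reachable ((H.connectedComponentMk v).out) v := fun v =>
    SimpleGraph.ConnectedComponent.exact ((H.connectedComponentMk v).out_eq)
  let c : W → Bool := fun v => decide (Even (hre v).some.length)
  have valid : ∀ {x y : W}, H.Adj x y → c x ≠ c y := by
    intro x y hxy
    have hcomp : (H.connectedComponentMk x).out = (H.connectedComponentMk y).out := by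
      rw [SimpleGraph.ConnectedComponent.sound hxy.reachable]
    have hq : Even ((hre y).some.length) ↔
        Even (((hre x).some.copy hcomp rfl).concat hxy).length := par _ _
    rw [Walk.length_concat, Walk.length_copy, Nat.even_add_one] at hq
    simp only [c, ne_eq, decide_eq_decide]
    tauto
  have C : H.Coloring Bool := SimpleGraph.Coloring.mk c fun hxy => valid hxy
  simpa using C.colorable

private lemma aux_zmod_count {n : ℕ} [NeZero n] (hodd : Odd n) (A : Finset (ZMod n))
    (hA : ∀ i ∈ A, i + 1 ∉ A) : 2 * A.card < n := by
  classical
  have hinj : Function.Injective (fun i : ZMod n => i + 1) := add_left_injective 1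
  have hdisj : Disjoint A (A.image (fun i => i + 1)) := by
    rw [Finset.disjoint_right]
    intro j hj hjA
    obtain ⟨i, hi, rfl⟩ := Finset.mem_image.mp hj
    exact hA i hi hjA
  have hle : (A ∪ A.image (fun i => i + 1)).card ≤ Fintype.card (ZMod n) :=
    Finset.card_le_univ _
  rw [Finset.card_union_of_disjoint hdisj, Finset.card_image_of_injective _ hinj,
    ZMod.card] at hle
  have hne : 2 * A.card ≠ n := by
    intro he
    rw [Nat.odd_iff] at hodd
    omega
  omega

/-- Key lemma: in a perfect graph `G` whose independent subsets of `S` have size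
at most `2`, any graph `H'` contained in the complement of `G` within `S` has no
odd closed walks. -/
private lemma aux_even {V : Type u} [Fintype V] {G H' : SimpleGraph V} {S : Set V}
    (hHS : ∀ x y, H'.Adj x y → x ∈ S ∧ ¬ G.Adj x y)
    (hperf : ∀ T : Set V, (G.induce T).chromaticNumber = ((G.induce T).cliqueNum : ℕ∞))
    (hα : ∀ A ⊆ S, _root_.IsIndepSet G A → A.ncard ≤ 2)
    (u : V) (p : H'.Walk u u) : Even p.length := by
  classical
  by_contra hne
  set bad : Set ℕ := {n | Odd n ∧ ∃ w : V, ∃ q : H'.Walk w w, q.length = n} with hbad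
  have hbadne : bad.Nonempty := ⟨p.length, Nat.not_even_iff_odd.mp hne, u, p, rfl⟩
  set n₀ : ℕ := sInf bad with hn₀
  obtain ⟨hodd, w, q, hq⟩ : n₀ ∈ bad := Nat.sInf_mem hbadne
  have hmin : ∀ (x : V) (c : H'.Walk x x), Odd c.length → n₀ ≤ c.length :=
    fun x c hc => Nat.sInf_le ⟨hc, x, c, rfl⟩
  have hpos : 0 < n₀ := hodd.pos
  have hn1 : n₀ ≠ 1 := by
    intro h1
    have hadj := q.adj_getVert_succ (i := 0) (by omega)
    have e : q.getVert 1 = w := by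
      have hl : q.length = 1 := by omega
      rw [← hl, Walk.getVert_length]
    exact hadj.ne (by simp [Walk.getVert_zero, e])
  have hn3 : 3 ≤ n₀ := by
    rw [Nat.odd_iff] at hodd; omega
  -- all support vertices lie in S
  have hsupS : ∀ v ∈ q.support, v ∈ S := by
    intro v hv
    have hts := congrArg Walk.length (q.take_spec hv)
    rw [Walk.length_append] at hts
    have hr : (q.rotate v hv).length = q.length := by
      simp only [Walk.rotate, Walk.length_append]; omega
    have hadj := (q.rotate v hv).adj_getVert_succ (i := 0) (by rw [hr, hq]; omega)
    rw [Walk.getVert_zero] at hadj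
    exact (hHS _ _ hadj).1
  -- the support (apart from the start) has no duplicates
  have hnd : q.support.tail.Nodup := by
    by_contra hndup
    obtain ⟨x, hdup⟩ := List.exists_duplicate_iff_not_nodup.mpr hndup
    have hcount : 2 ≤ q.support.tail.count x := List.duplicate_iff_two_le_count.mp hdup
    have hxsup : x ∈ q.support := List.mem_of_mem_tail hdup.mem
    have hts := congrArg Walk.length (q.take_spec hxsup)
    rw [Walk.length_append] at hts
    have hrlen : (q.rotate x hxsup).length = q.length := by
      simp only [Walk.rotate, Walk.length_append]; omega
    have hrcount : 2 ≤ (q.rotate x hxsup).support.tail.count x := by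
      rw [(Walk.support_rotate q x hxsup).perm.count_eq]; exact hcount
    have hrnil : ¬ (q.rotate x hxsup).Nil := by
      rw [Walk.not_nil_iff_lt_length, hrlen, hq]; omega
    obtain ⟨y, hadj, q₂, hcons⟩ := Walk.not_nil_iff.mp hrnil
    have hsup : (q.rotate x hxsup).support.tail = q₂.support := by
      rw [hcons, Walk.support_cons, List.tail_cons]
    have hcnt2 : 2 ≤ q₂.support.count x := by rw [← hsup]; exact hrcount
    have hxq₂ : x ∈ q₂.support := List.count_pos_iff.mp (by omega)
    have hts2 := congrArg Walk.length (q₂.take_spec hxq₂)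
    rw [Walk.length_append] at hts2
    have hlq₂ : q₂.length + 1 = n₀ := by
      have := hrlen
      rw [hcons, Walk.length_cons, hq] at this
      omega
    have hcnt : q₂.support.count x =
        (q₂.takeUntil x hxq₂).support.count x +
          (q₂.dropUntil x hxq₂).support.tail.count x := by
      conv_lhs => rw [← q₂.take_spec hxq₂]
      rw [Walk.support_append, List.count_append]
    have h1 : (q₂.takeUntil x hxq₂).support.count x = 1 :=
      q₂.count_support_takeUntil_eq_one hxq₂
    have ht2tailpos : 0 < (q₂.dropUntil x hxq₂).support.tail.length := by
      have hmem : x ∈ (q₂.dropUntil x hxq₂).support.tail :=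
        List.count_pos_iff.mp (by omega)
      exact List.length_pos_iff.mpr (List.ne_nil_of_mem hmem)
    have ht2len : 0 < (q₂.dropUntil x hxq₂).length := by
      have hls := Walk.length_support (q₂.dropUntil x hxq₂)
      have := List.length_tail (l := (q₂.dropUntil x hxq₂).support)
      omega
    -- two shorter closed walks whose lengths sum to n₀
    have hsum : (Walk.cons hadj (q₂.takeUntil x hxq₂)).length
        + (q₂.dropUntil x hxq₂).length = n₀ := by
      rw [Walk.length_cons]; omega
    rcases Nat.even_or_odd (Walk.cons hadj (q₂.takeUntil x hxq₂)).length with he | ho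
    · have hodd2 : Odd (q₂.dropUntil x hxq₂).length := by
        rw [Nat.odd_iff] at hodd ⊢
        rw [Nat.even_iff] at he
        omega
      have := hmin _ _ hodd2
      omega
    · have := hmin _ _ ho
      have hlc := Walk.length_cons hadj (q₂.takeUntil x hxq₂)
      omega
  -- the support of the walk
  set T' : Set V := {v | v ∈ q.support} with hT'
  have hT'S : T' ⊆ S := fun v hv => hsupS v hv
  have hT'fin : T' = ↑q.support.toFinset := by ext v; simp [hT']
  have hcardT' : n₀ ≤ T'.ncard := by
    rw [hT'fin, Set.ncard_coe_finset]
    have hsub : q.support.tail.toFinset ⊆ q.support.toFinset := by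
      intro v hv
      rw [List.mem_toFinset] at *
      exact List.mem_of_mem_tail hv
    calc n₀ = q.support.tail.length := by
          rw [List.length_tail, Walk.length_support, hq]; omega
      _ = q.support.tail.toFinset.card := (List.toFinset_card_of_nodup hnd).symm
      _ ≤ q.support.toFinset.card := Finset.card_le_card hsub
  -- chromatic side: T' is covered by cliqueNum-many independent sets of size ≤ 2
  have hcolorable : (G.induce T').Colorable ((G.induce T').cliqueNum) :=
    SimpleGraph.chromaticNumber_le_iff_colorable.mp (le_of_eq (hperf T'))
  obtain ⟨C⟩ := hcolorable
  have hfiber : ∀ i : Fin ((G.induce T').cliqueNum),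
      (Finset.univ.filter fun v : ↥T' => C v = i).card ≤ 2 := by
    intro i
    set A : Set V := Subtype.val '' {v : ↥T' | C v = i} with hA
    have hAS : A ⊆ S := by
      rintro x ⟨a, _, rfl⟩
      exact hT'S a.2
    have hAind : _root_.IsIndepSet G A := by
      rintro x ⟨a, ha, rfl⟩ y ⟨b, hb, rfl⟩ hxy hGadj
      have hab : (G.induce T').Adj a b := by
        simp only [SimpleGraph.comap_adj, Function.Embedding.coe_subtype]
        exact hGadj
      exact C.valid hab (ha.trans hb.symm)
    have hAcard : A.ncard = (Finset.univ.filter fun v : ↥T' => C v = i).card := by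
      rw [hA, Set.ncard_image_of_injective _ Subtype.val_injective,
        ← Set.ncard_coe_finset]
      congr 1
      ext v
      simp
    rw [← hAcard]
    exact hα A hAS hAind
  have hcardle : T'.ncard ≤ 2 * (G.induce T').cliqueNum := by
    have hfib := Finset.card_eq_sum_card_fiberwise
      (s := (Finset.univ : Finset ↥T'))
      (t := (Finset.univ : Finset (Fin ((G.induce T').cliqueNum))))
      (f := C) (fun x _ => Finset.mem_univ _)
    have : T'.ncard = Fintype.card ↥T' := by
      rw [Set.ncard_eq_toFinset_card', Set.toFinset_card]
    rw [this, ← Finset.card_univ, hfib]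
    calc ∑ i : Fin ((G.induce T').cliqueNum),
          (Finset.univ.filter fun v : ↥T' => C v = i).card
        ≤ ∑ _i : Fin ((G.induce T').cliqueNum), 2 :=
          Finset.sum_le_sum (fun i _ => hfiber i)
      _ = 2 * (G.induce T').cliqueNum := by
          simp [Finset.sum_const, mul_comm]
  -- clique side: every clique gives an "independent set" in the cycle ZMod n₀
  obtain ⟨Kf, hKf⟩ := SimpleGraph.exists_isNClique_cliqueNum (G := G.induce T')
  haveI : NeZero n₀ := ⟨by omega⟩
  have hidx : ∀ v : ↥T', ∃ i : ℕ, i < n₀ ∧ q.getVert i = ↑v := by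
    intro v
    obtain ⟨i, hgv, hile⟩ := Walk.mem_support_iff_exists_getVert.mp v.2
    rcases lt_or_eq_of_le hile with h | h
    · exact ⟨i, by rwa [hq] at h, hgv⟩
    · refine ⟨0, by omega, ?_⟩
      rw [h, Walk.getVert_length] at hgv
      rw [Walk.getVert_zero, hgv]
  set g : ↥T' → ZMod n₀ := fun v => ((hidx v).choose : ZMod n₀) with hg
  have key : ∀ v : ↥T', q.getVert ((g v).val) = ↑v := by
    intro v
    have h1 := (hidx v).choose_spec
    simp only [hg]
    rw [ZMod.val_cast_of_lt h1.1]
    exact h1.2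
  have hginj : Function.Injective g := by
    intro a b hab
    apply Subtype.ext
    rw [← key a, ← key b, hab]
  set A : Finset (ZMod n₀) := Kf.image g with hAdef
  have hnocons : ∀ i ∈ A, i + 1 ∉ A := by
    intro i hi hi1
    obtain ⟨a, ha, rfl⟩ := Finset.mem_image.mp hi
    obtain ⟨b, hb, hgb⟩ := Finset.mem_image.mp hi1
    have hj : (g a).val < n₀ := (g a).val_lt
    have hadj : H'.Adj (q.getVert ((g a).val)) (q.getVert ((g a).val + 1)) :=
      q.adj_getVert_succ (by rw [hq]; exact hj)
    have hb' : q.getVert ((g a).val + 1) = ↑b := by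
      rcases eq_or_lt_of_le (Nat.succ_le_of_lt hj) with h'' | h
      · have h : (g a).val + 1 = n₀ := h''
        have h0 : g a + 1 = 0 := by
          conv_lhs => rw [← ZMod.natCast_zmod_val (g a)]
          rw [← Nat.cast_one, ← Nat.cast_add, h, ZMod.natCast_self]
        have hgb0 : g b = 0 := by rw [hgb, h0]
        have := key b
        rw [hgb0] at this
        rw [h, ← hq, Walk.getVert_length, ← Walk.getVert_zero q]
        simpa [ZMod.val_zero] using this
      · have hval : (g a + 1).val = (g a).val + 1 := by
          conv_lhs => rw [← ZMod.natCast_zmod_val (g a), ← Nat.cast_one, ← Nat.cast_add]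
          exact ZMod.val_cast_of_lt h
        have := key b
        rw [hgb, hval] at this
        exact this
    rw [key a] at hadj
    rw [hb'] at hadj
    have hne' : a ≠ b := fun h => hadj.ne (by rw [h])
    have hGadj : G.Adj ↑a ↑b := by
      have := hKf.isClique ha hb (by exact_mod_cast hne')
      simpa only [SimpleGraph.comap_adj, Function.Embedding.coe_subtype] using this
    exact (hHS _ _ hadj).2 hGadj
  have hAcard : A.card = Kf.card := Finset.card_image_of_injective _ hginj
  have hcount := aux_zmod_count hodd A hnocons
  rw [hAcard, hKf.card_eq] at hcount
  omega

end Aux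

/-- In a perfect graph, a vertex set is a union of two cliques iff it induces a
subgraph with independence number at most 2. -/
theorem stmt15 {V : Type u} [Fintype V] (G : SimpleGraph V)
    (hperf : ∀ S : Set V, (G.induce S).chromaticNumber = ((G.induce S).cliqueNum : ℕ∞))
    (S : Set V) :
    (∃ K₁ K₂ : Set V, G.IsClique K₁ ∧ G.IsClique K₂ ∧ S = K₁ ∪ K₂) ↔
    (∀ A ⊆ S, _root_.IsIndepSet G A → A.ncard ≤ 2) := by
  classical
  constructor
  · rintro ⟨K₁, K₂, h1, h2, rfl⟩ A hA hind
    have hsub : A ⊆ (A ∩ K₁) ∪ (A ∩ K₂) := by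
      intro x hx
      rcases hA hx with h | h
      exacts [Or.inl ⟨hx, h⟩, Or.inr ⟨hx, h⟩]
    have h1' : (A ∩ K₁).ncard ≤ 1 := by
      rw [Set.ncard_le_one_iff]
      rintro a b ⟨haA, haK⟩ ⟨hbA, hbK⟩
      by_contra hne
      exact hind a haA b hbA hne (h1 haK hbK hne)
    have h2' : (A ∩ K₂).ncard ≤ 1 := by
      rw [Set.ncard_le_one_iff]
      rintro a b ⟨haA, haK⟩ ⟨hbA, hbK⟩
      by_contra hne
      exact hind a haA b hbA hne (h2 haK hbK hne)
    calc A.ncard ≤ ((A ∩ K₁) ∪ (A ∩ K₂)).ncard :=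
          Set.ncard_le_ncard hsub (Set.toFinite _)
      _ ≤ (A ∩ K₁).ncard + (A ∩ K₂).ncard := Set.ncard_union_le _ _
      _ ≤ 2 := by omega
  · intro hα
    let H' : SimpleGraph V :=
      { Adj := fun x y => x ∈ S ∧ y ∈ S ∧ x ≠ y ∧ ¬ G.Adj x y
        symm := ⟨by
          rintro x y ⟨hx, hy, hne, hnadj⟩
          exact ⟨hy, hx, hne.symm, fun h => hnadj h.symm⟩⟩
        loopless := ⟨by
          rintro x ⟨_, _, hne, _⟩
          exact hne rfl⟩ }
    have hHS : ∀ x y, H'.Adj x y → x ∈ S ∧ ¬ G.Adj x y := fun x y h => ⟨h.1, h.2.2.2⟩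
    have heven := aux_even (G := G) (H' := H') (S := S) hHS hperf hα
    obtain ⟨C⟩ := aux_colorable_two H' heven
    have hfin2 : ∀ i : Fin 2, i ≠ 0 → i = 1 := by decide
    refine ⟨{v | v ∈ S ∧ C v = 0}, {v | v ∈ S ∧ C v ≠ 0}, ?_, ?_, ?_⟩
    · rintro x ⟨hxS, hx0⟩ y ⟨hyS, hy0⟩ hne
      by_contra hnadj
      exact C.valid ⟨hxS, hyS, hne, hnadj⟩ (hx0.trans hy0.symm)
    · rintro x ⟨hxS, hx0⟩ y ⟨hyS, hy0⟩ hne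
      by_contra hnadj
      exact C.valid ⟨hxS, hyS, hne, hnadj⟩ ((hfin2 _ hx0).trans (hfin2 _ hy0).symm)
    · ext v
      constructor
      · intro hv
        by_cases h0 : C v = 0
        · exact Or.inl ⟨hv, h0⟩
        · exact Or.inr ⟨hv, h0⟩
      · rintro (⟨hv, _⟩ | ⟨hv, _⟩) <;> exact hv
end

section
/- Let G be a graph containing an induced subgraph isomorphic to a co-domino with vertices a1, a2, v1, v2, v3, v4 (edges v1v2, v2v3, v3v4, v4v1, a1v1, a1v2, a2v3, a2v4). If some connected component of G minus (N(v1) ∪ N(v2) ∪ N(v3) ∪ N(v4)) contains a neighbor of a1 and a neighbor of a2, then G contains a long prism as an induced subgraph. -/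
open SimpleGraph

universe u v

namespace StmtAux

variable {V : Type u} {G : SimpleGraph V}

lemma edge_of_length_one {u v : V} : ∀ (w : G.Walk u v), w.length = 1 → s(u, v) ∈ w.edges
  | .cons a .nil, _ => by simp
  | .nil, h => by simp at h
  | .cons a (.cons b r), h => by simp [SimpleGraph.Walk.length_cons] at h

lemma exists_chordless_path (G : SimpleGraph V) {u v : V} (h : G.Reachable u v) :
    ∃ p : G.Walk u v, p.IsPath ∧
      ∀ x ∈ p.support, ∀ y ∈ p.support, G.Adj x y → s(x, y) ∈ p.edges := by
  classical
  obtain ⟨q, hq⟩ := h.exists_walk_length_eq_dist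
  have hmin : ∀ r : G.Walk u v, q.bypass.length ≤ r.length := fun r => by
    calc q.bypass.length ≤ q.length := q.length_bypass_le
    _ = G.dist u v := hq
    _ ≤ r.length := SimpleGraph.dist_le r
  refine ⟨q.bypass, q.bypass_isPath, ?_⟩
  set p := q.bypass with hp
  intro x hx y hy hadj
  by_contra hne
  have hxy : x ≠ y := hadj.ne
  have hlen : (p.takeUntil x hx).length + (p.dropUntil x hx).length = p.length := by
    have := congrArg SimpleGraph.Walk.length (p.take_spec hx)
    rwa [SimpleGraph.Walk.length_append] at this
  by_cases hyd : y ∈ (p.dropUntil x hx).support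
  · set d := p.dropUntil x hx with hd
    have hlen2 : (d.takeUntil y hyd).length + (d.dropUntil y hyd).length = d.length := by
      have := congrArg SimpleGraph.Walk.length (d.take_spec hyd)
      rwa [SimpleGraph.Walk.length_append] at this
    have h0 : (d.takeUntil y hyd).length ≠ 0 :=
      fun h => hxy (SimpleGraph.Walk.eq_of_length_eq_zero h)
    have h1 : (d.takeUntil y hyd).length ≠ 1 := fun h =>
      hne (p.edges_dropUntil_subset hx (d.edges_takeUntil_subset hyd (edge_of_length_one _ h)))
    have := hmin ((p.takeUntil x hx).append (SimpleGraph.Walk.cons hadj (d.dropUntil y hyd)))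
    rw [SimpleGraph.Walk.length_append, SimpleGraph.Walk.length_cons] at this
    omega
  · have hyt : y ∈ (p.takeUntil x hx).support := by
      have h' := hy
      rw [← p.take_spec hx, SimpleGraph.Walk.mem_support_append_iff] at h'
      tauto
    set t := p.takeUntil x hx with ht
    have hlen2 : (t.takeUntil y hyt).length + (t.dropUntil y hyt).length = t.length := by
      have := congrArg SimpleGraph.Walk.length (t.take_spec hyt)
      rwa [SimpleGraph.Walk.length_append] at this
    have h0 : (t.dropUntil y hyt).length ≠ 0 :=
      fun h => hxy (SimpleGraph.Walk.eq_of_length_eq_zero h).symm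
    have h1 : (t.dropUntil y hyt).length ≠ 1 := fun h => by
      have := p.edges_takeUntil_subset hx (t.edges_dropUntil_subset hyt (edge_of_length_one _ h))
      rw [Sym2.eq_swap] at this
      exact hne this
    have := hmin ((t.takeUntil y hyt).append
      (SimpleGraph.Walk.cons hadj.symm (p.dropUntil x hx)))
    rw [SimpleGraph.Walk.length_append, SimpleGraph.Walk.length_cons] at this
    omega

/-- Inclusion hom from an induced subgraph. -/
def inc (G : SimpleGraph V) (T : Set V) : G.induce T →g G := ⟨Subtype.val, fun h => h⟩

@[simp] lemma inc_apply (T : Set V) (x : T) : inc G T x = ↑x := rfl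

def liftWalk {T : Set V} : ∀ {u v : V} (p : G.Walk u v) (hs : ∀ x ∈ p.support, x ∈ T),
    (G.induce T).Walk ⟨u, hs u p.start_mem_support⟩ ⟨v, hs v p.end_mem_support⟩
  | _, _, Walk.nil, _ => Walk.nil
  | _, _, Walk.cons a q, hs => by
      refine Walk.cons ?_ (liftWalk q (fun x hx => hs x (by simp [hx])))
      exact a

lemma liftWalk_map {T : Set V} : ∀ {u v : V} (p : G.Walk u v)
    (hs : ∀ x ∈ p.support, x ∈ T), (liftWalk p hs).map (inc G T) = p
  | _, _, Walk.nil, _ => rfl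
  | _, _, Walk.cons a q, hs => by
      exact congrArg (Walk.cons a) (liftWalk_map q (fun x hx => hs x (by simp [hx])))

lemma liftWalk_support {T : Set V} {u v : V} (p : G.Walk u v)
    (hs : ∀ x ∈ p.support, x ∈ T) :
    (liftWalk p hs).support.map Subtype.val = p.support := by
  conv_rhs => rw [← liftWalk_map p hs]
  exact (Walk.support_map (inc G T) (liftWalk p hs)).symm

lemma mem_liftWalk_support {T : Set V} {u v : V} (p : G.Walk u v)
    (hs : ∀ x ∈ p.support, x ∈ T) (x : T) :
    x ∈ (liftWalk p hs).support ↔ ↑x ∈ p.support := by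
  rw [← liftWalk_support p hs, List.mem_map]
  constructor
  · intro hx; exact ⟨x, hx, rfl⟩
  · rintro ⟨a, ha, heq⟩
    have : a = x := Subtype.val_injective heq
    rwa [← this]

lemma liftWalk_length {T : Set V} {u v : V} (p : G.Walk u v)
    (hs : ∀ x ∈ p.support, x ∈ T) : (liftWalk p hs).length = p.length := by
  conv_rhs => rw [← liftWalk_map p hs]
  exact (Walk.length_map _ _).symm

lemma liftWalk_isPath {T : Set V} {u v : V} (p : G.Walk u v)
    (hs : ∀ x ∈ p.support, x ∈ T) (hp : p.IsPath) : (liftWalk p hs).IsPath := by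
  rw [Walk.isPath_def]
  have := hp.support_nodup
  rw [← liftWalk_support p hs] at this
  exact this.of_map _

lemma mem_liftWalk_edges {T : Set V} {u v : V} (p : G.Walk u v)
    (hs : ∀ x ∈ p.support, x ∈ T) (x y : T) :
    s(x, y) ∈ (liftWalk p hs).edges ↔ s((x : V), (y : V)) ∈ p.edges := by
  have hmap : (liftWalk p hs).edges.map (Sym2.map Subtype.val) = p.edges := by
    conv_rhs => rw [← liftWalk_map p hs]
    exact (Walk.edges_map (inc G T) (liftWalk p hs)).symm
  rw [← hmap, List.mem_map]
  constructor
  · intro hx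
    exact ⟨s(x, y), hx, by simp⟩
  · rintro ⟨e, he, heq⟩
    have : e = s(x, y) := Sym2.map.injective Subtype.val_injective (by simpa using heq)
    rwa [← this]

lemma sym2_subtype_eq {S : Set V} (x y a b : S) :
    (s(x, y) = s(a, b)) ↔ (s((x : V), (y : V)) = s((a : V), (b : V))) := by
  simp [Sym2.eq_iff, Subtype.ext_iff]

lemma exists_chordless_path_out {S : Set V} {u v : V} (hu : u ∈ S) (hv : v ∈ S)
    (h : (G.induce S).Reachable ⟨u, hu⟩ ⟨v, hv⟩) :
    ∃ P : G.Walk u v, P.IsPath ∧ (∀ x ∈ P.support, x ∈ S) ∧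
      ∀ x ∈ P.support, ∀ y ∈ P.support, G.Adj x y → s(x, y) ∈ P.edges := by
  obtain ⟨p, hp, hchord⟩ := exists_chordless_path _ h
  refine ⟨p.map (inc G S), Walk.map_isPath_of_injective Subtype.val_injective hp, ?_, ?_⟩
  · intro x hx
    have e := Walk.support_map (inc G S) p
    have hx : x ∈ p.support.map (inc G S) := by rw [← e]; exact hx
    rw [List.mem_map] at hx
    obtain ⟨x', _, rfl⟩ := hx
    exact x'.2
  · intro x hx y hy hadj
    have e := Walk.support_map (inc G S) p
    have hx : x ∈ p.support.map (inc G S) := by rw [← e]; exact hx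
    have hy : y ∈ p.support.map (inc G S) := by rw [← e]; exact hy
    rw [List.mem_map] at hx hy
    obtain ⟨x', hx', rfl⟩ := hx
    obtain ⟨y', hy', rfl⟩ := hy
    have := hchord x' hx' y' hy' hadj
    have e2 := Walk.edges_map (inc G S) p
    suffices hs : s(inc G S x', inc G S y') ∈ p.edges.map (Sym2.map (inc G S)) by rw [← e2] at hs; exact hs
    rw [List.mem_map]
    exact ⟨s(x', y'), this, by simp⟩

end StmtAux

set_option maxHeartbeats 1600000 in
open StmtAux in
/-- Step 1 of the long-prism detection algorithm: an induced co-domino plus a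
component of `G − (N(v₁) ∪ N(v₂) ∪ N(v₃) ∪ N(v₄))` containing neighbors of both
`a₁` and `a₂` yields an induced long prism. -/
theorem stmt18 {V : Type u} [Fintype V] (G : SimpleGraph V)
    (a₁ a₂ v₁ v₂ v₃ v₄ : V)
    (hnodup : [a₁, a₂, v₁, v₂, v₃, v₄].Nodup)
    (hadj : ∀ x ∈ [a₁, a₂, v₁, v₂, v₃, v₄], ∀ y ∈ [a₁, a₂, v₁, v₂, v₃, v₄],
      (G.Adj x y ↔ s(x, y) ∈ ({s(v₁, v₂), s(v₂, v₃), s(v₃, v₄), s(v₄, v₁),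
        s(a₁, v₁), s(a₁, v₂), s(a₂, v₃), s(a₂, v₄)} : Set (Sym2 V))))
    (C : Set V)
    (hCav : ∀ u ∈ C, ¬ G.Adj v₁ u ∧ ¬ G.Adj v₂ u ∧ ¬ G.Adj v₃ u ∧ ¬ G.Adj v₄ u)
    (hCconn : (G.induce C).Connected)
    (hCmax : ∀ u ∈ C, ∀ w : V, w ∉ C →
      (¬ G.Adj v₁ w ∧ ¬ G.Adj v₂ w ∧ ¬ G.Adj v₃ w ∧ ¬ G.Adj v₄ w) → ¬ G.Adj u w)
    (h1 : ∃ u ∈ C, G.Adj a₁ u) (h2 : ∃ u ∈ C, G.Adj a₂ u) :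
    ∃ T : Set V, IsLongPrism (G.induce T) := by
  classical
  -- distinctness facts
  simp only [List.nodup_cons, List.mem_cons, List.not_mem_nil, or_false, List.mem_singleton,
    List.nodup_nil, and_true, not_or] at hnodup
  obtain ⟨⟨nA, n1, n2, n3, n4⟩, ⟨m1, m2, m3, m4⟩, ⟨p12, p13, p14⟩, ⟨p23, p24⟩, p34, -⟩ := hnodup
  -- adjacency facts among the six vertices
  have h12 : G.Adj v₁ v₂ := (hadj v₁ (by simp) v₂ (by simp)).2 (by simp)
  have h23 : G.Adj v₂ v₃ := (hadj v₂ (by simp) v₃ (by simp)).2 (by simp)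
  have h34 : G.Adj v₃ v₄ := (hadj v₃ (by simp) v₄ (by simp)).2 (by simp)
  have h41 : G.Adj v₄ v₁ := (hadj v₄ (by simp) v₁ (by simp)).2 (by simp)
  have ha11 : G.Adj a₁ v₁ := (hadj a₁ (by simp) v₁ (by simp)).2 (by simp)
  have ha12 : G.Adj a₁ v₂ := (hadj a₁ (by simp) v₂ (by simp)).2 (by simp)
  have ha23 : G.Adj a₂ v₃ := (hadj a₂ (by simp) v₃ (by simp)).2 (by simp)
  have ha24 : G.Adj a₂ v₄ := (hadj a₂ (by simp) v₄ (by simp)).2 (by simp)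
  have hna : ¬ G.Adj a₁ a₂ := by
    rw [hadj a₁ (by simp) a₂ (by simp)]
    simp [Sym2.eq_iff, nA, n1, n2, n3, n4, m1, m2, m3, m4, Ne.symm nA, Ne.symm n1, Ne.symm n2, Ne.symm n3,
      Ne.symm n4, Ne.symm m1, Ne.symm m2, Ne.symm m3, Ne.symm m4]
  -- the six vertices are not in C
  have ha₁C : a₁ ∉ C := fun h => (hCav a₁ h).1 ha11.symm
  have ha₂C : a₂ ∉ C := fun h => (hCav a₂ h).2.2.1 ha23.symm
  have hv₁C : v₁ ∉ C := fun h => (hCav v₁ h).2.1 h12.symm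
  have hv₂C : v₂ ∉ C := fun h => (hCav v₂ h).1 h12
  have hv₃C : v₃ ∉ C := fun h => (hCav v₃ h).2.1 h23
  have hv₄C : v₄ ∉ C := fun h => (hCav v₄ h).2.2.1 h34
  -- the induced path from a₁ to a₂ through C
  obtain ⟨u₁, hu₁C, hau₁⟩ := h1
  obtain ⟨u₂, hu₂C, hau₂⟩ := h2
  set S₀ : Set V := insert a₁ (insert a₂ C) with hS₀
  have ha₁S : a₁ ∈ S₀ := Set.mem_insert _ _
  have ha₂S : a₂ ∈ S₀ := Set.mem_insert_of_mem _ (Set.mem_insert _ _)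
  have hCS : ∀ {z : V}, z ∈ C → z ∈ S₀ := fun hz =>
    Set.mem_insert_of_mem _ (Set.mem_insert_of_mem _ hz)
  have hreach : (G.induce S₀).Reachable ⟨a₁, ha₁S⟩ ⟨a₂, ha₂S⟩ := by
    have rC : (G.induce C).Reachable ⟨u₁, hu₁C⟩ ⟨u₂, hu₂C⟩ := hCconn.preconnected _ _
    have rC' : (G.induce S₀).Reachable ⟨u₁, hCS hu₁C⟩ ⟨u₂, hCS hu₂C⟩ :=
      Reachable.map (⟨fun x => ⟨x.1, hCS x.2⟩, fun h => h⟩ : G.induce C →g G.induce S₀) rC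
    have r1 : (G.induce S₀).Adj ⟨a₁, ha₁S⟩ ⟨u₁, hCS hu₁C⟩ := hau₁
    have r2 : (G.induce S₀).Adj ⟨u₂, hCS hu₂C⟩ ⟨a₂, ha₂S⟩ := hau₂.symm
    exact r1.reachable.trans (rC'.trans r2.reachable)
  obtain ⟨P, hPpath, hPsub, hPchord⟩ := exists_chordless_path_out ha₁S ha₂S hreach
  have hl0 : P.length ≠ 0 := fun h => nA (SimpleGraph.Walk.eq_of_length_eq_zero h)
  have hl1 : P.length ≠ 1 := fun h => hna (P.adj_of_mem_edges (edge_of_length_one P h))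
  have hlen2 : 2 ≤ P.length := by omega
  -- vᵢ not on the path
  have hvP : ∀ z : V, z ∈ P.support → z = a₁ ∨ z = a₂ ∨ z ∈ C := by
    intro z hz
    have := hPsub z hz
    rw [hS₀, Set.mem_insert_iff, Set.mem_insert_iff] at this
    tauto
  have hv₁P : v₁ ∉ P.support := fun h => by
    rcases hvP v₁ h with h' | h' | h' <;> [exact n1 h'.symm; exact m1 h'.symm; exact hv₁C h']
  have hv₂P : v₂ ∉ P.support := fun h => by
    rcases hvP v₂ h with h' | h' | h' <;> [exact n2 h'.symm; exact m2 h'.symm; exact hv₂C h']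
  have hv₃P : v₃ ∉ P.support := fun h => by
    rcases hvP v₃ h with h' | h' | h' <;> [exact n3 h'.symm; exact m3 h'.symm; exact hv₃C h']
  have hv₄P : v₄ ∉ P.support := fun h => by
    rcases hvP v₄ h with h' | h' | h' <;> [exact n4 h'.symm; exact m4 h'.symm; exact hv₄C h']
  -- the vertex set of the long prism
  set T : Set V := {v₁, v₂, v₃, v₄} ∪ {x | x ∈ P.support} with hT
  have hTv₁ : v₁ ∈ T := Or.inl (by simp)
  have hTv₂ : v₂ ∈ T := Or.inl (by simp)
  have hTv₃ : v₃ ∈ T := Or.inl (by simp)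
  have hTv₄ : v₄ ∈ T := Or.inl (by simp)
  have hPsubT : ∀ x ∈ P.support, x ∈ T := fun x hx => Or.inr hx
  have hcase : ∀ z : V, z ∈ T →
      z = v₁ ∨ z = v₂ ∨ z = v₃ ∨ z = v₄ ∨ z = a₁ ∨ z = a₂ ∨ (z ∈ C ∧ z ∈ P.support) := by
    intro z hz
    rcases hz with h4 | hP
    · have : z = v₁ ∨ z = v₂ ∨ z = v₃ ∨ z = v₄ := by simpa using h4
      tauto
    · have hP' : z ∈ P.support := hP
      rcases hvP z hP' with rfl | rfl | hzC
      · tauto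
      · tauto
      · exact Or.inr (Or.inr (Or.inr (Or.inr (Or.inr (Or.inr ⟨hzC, hP'⟩)))))
  have hw14 : (G.induce T).Adj ⟨v₁, hTv₁⟩ ⟨v₄, hTv₄⟩ := h41.symm
  have hw23 : (G.induce T).Adj ⟨v₂, hTv₂⟩ ⟨v₃, hTv₃⟩ := h23
  have sixcase : ∀ x ∈ [a₁, a₂, v₁, v₂, v₃, v₄], ∀ y ∈ [a₁, a₂, v₁, v₂, v₃, v₄],
      G.Adj x y → s(x, y) = s(v₁, v₄) ∨ s(x, y) = s(v₂, v₃) ∨ (s(x, y) = s(v₁, v₂) ∨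
        s(x, y) = s(v₂, a₁) ∨ s(x, y) = s(v₁, a₁) ∨ s(x, y) = s(v₄, v₃) ∨
        s(x, y) = s(v₃, a₂) ∨ s(x, y) = s(v₄, a₂)) := by
    intro x hx y hy h
    rw [hadj x hx y hy] at h
    simp only [Set.mem_insert_iff, Set.mem_singleton_iff] at h
    rcases h with h | h | h | h | h | h | h | h
    · exact Or.inr (Or.inr (Or.inl h))
    · exact Or.inr (Or.inl h)
    · exact Or.inr (Or.inr (Or.inr (Or.inr (Or.inr (Or.inl (h.trans (Sym2.eq_swap)))))))
    · exact Or.inl (h.trans (Sym2.eq_swap))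
    · exact Or.inr (Or.inr (Or.inr (Or.inr (Or.inl (h.trans (Sym2.eq_swap))))))
    · exact Or.inr (Or.inr (Or.inr (Or.inl (h.trans (Sym2.eq_swap)))))
    · exact Or.inr (Or.inr (Or.inr (Or.inr (Or.inr (Or.inr (Or.inl (h.trans (Sym2.eq_swap))))))))
    · exact Or.inr (Or.inr (Or.inr (Or.inr (Or.inr (Or.inr (Or.inr (h.trans (Sym2.eq_swap))))))))
  refine ⟨T, ⟨v₁, hTv₁⟩, ⟨v₂, hTv₂⟩, ⟨a₁, hPsubT a₁ P.start_mem_support⟩,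
    ⟨v₄, hTv₄⟩, ⟨v₃, hTv₃⟩, ⟨a₂, hPsubT a₂ P.end_mem_support⟩,
    Walk.cons hw14 Walk.nil, Walk.cons hw23 Walk.nil, liftWalk P hPsubT,
    ?_, ?_, ?_, ?_, ?_, ?_, ?_, ?_, ?_, ?_, ?_, ?_⟩
  · simp [Walk.isPath_def, Subtype.mk.injEq, p14]
  · simp [Walk.isPath_def, Subtype.mk.injEq, p23]
  · exact liftWalk_isPath P hPsubT hPpath
  · simp
  · simp
  · rw [liftWalk_length]; omega
  · right; right; rw [liftWalk_length]; omega
  · rintro ⟨x, hx⟩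
    rcases hcase x hx with rfl | rfl | rfl | rfl | rfl | rfl | ⟨hxC, hxP⟩
    · left; simp
    · right; left; simp
    · right; left; simp
    · left; simp
    · right; right; exact (mem_liftWalk_support P hPsubT _).2 P.start_mem_support
    · right; right; exact (mem_liftWalk_support P hPsubT _).2 P.end_mem_support
    · right; right; exact (mem_liftWalk_support P hPsubT _).2 hxP
  · rintro ⟨x, hx⟩ h1 h2
    simp only [Walk.support_cons, Walk.support_nil, List.mem_cons, List.not_mem_nil, or_false,
      Subtype.mk.injEq] at h1 h2
    rcases h1 with rfl | rfl <;> rcases h2 with h2 | h2 <;>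
      first
        | exact p12 h2 | exact p13 h2 | exact p14 h2 | exact p23 h2 | exact p24 h2
        | exact p34 h2 | exact p12 h2.symm | exact p13 h2.symm | exact p14 h2.symm
        | exact p23 h2.symm | exact p24 h2.symm | exact p34 h2.symm
  · rintro ⟨x, hx⟩ h1 h2
    rw [mem_liftWalk_support] at h2
    simp only [Walk.support_cons, Walk.support_nil, List.mem_cons, List.not_mem_nil, or_false,
      Subtype.mk.injEq] at h1
    rcases h1 with rfl | rfl
    · exact hv₁P h2
    · exact hv₄P h2
  · rintro ⟨x, hx⟩ h1 h2
    rw [mem_liftWalk_support] at h2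
    simp only [Walk.support_cons, Walk.support_nil, List.mem_cons, List.not_mem_nil, or_false,
      Subtype.mk.injEq] at h1
    rcases h1 with rfl | rfl
    · exact hv₂P h2
    · exact hv₃P h2
  · rintro ⟨x, hx⟩ ⟨y, hy⟩
    show G.Adj x y ↔ _
    simp only [Walk.edges_cons, Walk.edges_nil, List.mem_cons, List.not_mem_nil, or_false,
      mem_liftWalk_edges, Set.mem_insert_iff, Set.mem_singleton_iff, sym2_subtype_eq]
    have keyC : ∀ x' y' : V, x' ∈ C → x' ∈ P.support → y' ∈ T → G.Adj x' y' →
        s(x', y') ∈ P.edges := by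
      intro x' y' hxC hxP hy' h
      rcases hcase y' hy' with rfl | rfl | rfl | rfl | rfl | rfl | ⟨hyC, hyP⟩
      · exact absurd h.symm (hCav _ hxC).1
      · exact absurd h.symm (hCav _ hxC).2.1
      · exact absurd h.symm (hCav _ hxC).2.2.1
      · exact absurd h.symm (hCav _ hxC).2.2.2
      · exact hPchord _ hxP _ P.start_mem_support h
      · exact hPchord _ hxP _ P.end_mem_support h
      · exact hPchord _ hxP _ hyP h
    constructor
    · intro h
      rcases hcase x hx with rfl | rfl | rfl | rfl | rfl | rfl | ⟨hxC, hxP⟩ <;>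
        first
          | (exact Or.inr (Or.inr (Or.inl (keyC x y ‹x ∈ C› ‹x ∈ P.support› hy h))))
          | (rcases hcase y hy with rfl | rfl | rfl | rfl | rfl | rfl | ⟨hyC, hyP⟩ <;>
              first
                | (have hpe := keyC y _ ‹y ∈ C› ‹y ∈ P.support› hx h.symm
                   rw [Sym2.eq_swap] at hpe
                   exact Or.inr (Or.inr (Or.inl hpe)))
                | (have h6 := sixcase _ (by simp) _ (by simp) h
                   exact h6.imp id (fun h' => h'.imp id Or.inr)))
    · intro h
      rcases h with h | h | h | h | h | h | h | h | h
      all_goals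
        first
          | exact P.adj_of_mem_edges h
          | (rcases Sym2.eq_iff.mp h with ⟨rfl, rfl⟩ | ⟨rfl, rfl⟩ <;>
              first
                | exact h41.symm | exact h41 | exact h23 | exact h23.symm
                | exact h12 | exact h12.symm | exact ha11 | exact ha11.symm
                | exact ha12 | exact ha12.symm | exact h34 | exact h34.symm
                | exact ha23 | exact ha23.symm | exact ha24 | exact ha24.symm)
end
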